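/- arXiv:2003.12408 — 2 statements merged into one kernel-verified Lean document; each statement's English description precedes it below -/
import Mathlib

section
/- Identification without surrogates on the unlabelled data (Settings I and II). Under Assumptions 1, 2 and 3, suppose Y(0), Y(1) ∈ L¹(P) and let ν : {0,1}×𝒳×𝒮 → ℝ be measurable with ν(T,X,S) = E[Y | σ(T,X,S,R)] a.s. on {R=1}. Then for each t ∈ {0,1}: (a) E[Y(t)] = E[h_t(X)] for any measurable h_t : 𝒳 → ℝ with h_t(X) = E[ν(T,X,S) | σ(T,X,R)] a.s. on the event {T=t, R=1}; and (b) E[Y(t)] = E[m_t(X)] for any measurable m_t : 𝒳 → ℝ with m_t(X) = E[Y | σ(T,X,R)] a.s. on the event {T=t, R=1}. -/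
open MeasureTheory ProbabilityTheory Filter
open scoped ENNReal NNReal Topology

noncomputable section

namespace Surrogate

variable {Ω 𝒳 𝒮 : Type*} [MeasurableSpace Ω] [MeasurableSpace 𝒳] [MeasurableSpace 𝒮]

/-- Potential value indexed by `t ∈ {0,1}` (encoded as a real number). -/
def pot {α : Type*} (a0 a1 : Ω → α) (t : ℝ) : Ω → α := if t = 1 then a1 else a0

/-- Observed value `a(T)`. -/
def obs {α : Type*} (T : Ω → ℝ) (a0 a1 : Ω → α) : Ω → α := fun ω => if T ω = 1 then a1 ω else a0 ω

/-- σ-algebra generated by one random variable. -/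
def mX (X : Ω → 𝒳) : MeasurableSpace Ω := MeasurableSpace.comap X inferInstance

/-- σ-algebra generated by a pair of random variables. -/
def m2 {α β : Type*} [MeasurableSpace α] [MeasurableSpace β] (U : Ω → α) (V : Ω → β) :
    MeasurableSpace Ω := MeasurableSpace.comap (fun ω => (U ω, V ω)) inferInstance

/-- σ-algebra generated by a triple of random variables. -/
def m3 {α β γ : Type*} [MeasurableSpace α] [MeasurableSpace β] [MeasurableSpace γ]
    (U : Ω → α) (V : Ω → β) (W : Ω → γ) : MeasurableSpace Ω :=
  MeasurableSpace.comap (fun ω => (U ω, V ω, W ω)) inferInstance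

/-- σ-algebra generated by four random variables. -/
def m4 {α β γ δ : Type*} [MeasurableSpace α] [MeasurableSpace β] [MeasurableSpace γ]
    [MeasurableSpace δ] (U : Ω → α) (V : Ω → β) (W : Ω → γ) (Z : Ω → δ) : MeasurableSpace Ω :=
  MeasurableSpace.comap (fun ω => (U ω, V ω, W ω, Z ω)) inferInstance

/-- A real-valued function is bounded. -/
def Bdd {α : Type*} (f : α → ℝ) : Prop := ∃ C, ∀ a, |f a| ≤ C

/-- Conditional independence of two random variables given a sub-σ-algebra, phrased through
bounded measurable test functions. -/
def CondIndepBdd (P : Measure Ω) (m : MeasurableSpace Ω) {α β : Type*}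
    [MeasurableSpace α] [MeasurableSpace β] (U : Ω → α) (V : Ω → β) : Prop :=
  ∀ f : α → ℝ, Measurable f → Bdd f → ∀ g : β → ℝ, Measurable g → Bdd g →
    P[fun ω => f (U ω) * g (V ω)|m]
      =ᵐ[P] fun ω => (P[fun ω' => f (U ω')|m]) ω * (P[fun ω' => g (V ω')|m]) ω

/-- Variance `E[Z²] − (E[Z])²`. -/
def Var (P : Measure Ω) (Z : Ω → ℝ) : ℝ := (∫ ω, (Z ω) ^ 2 ∂P) - (∫ ω, Z ω ∂P) ^ 2

/-- Conditional variance `E[Z²|m] − (E[Z|m])²`. -/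
def condVar (P : Measure Ω) (m : MeasurableSpace Ω) (Z : Ω → ℝ) : Ω → ℝ :=
  fun ω => (P[fun ω' => (Z ω') ^ 2|m]) ω - ((P[Z|m]) ω) ^ 2

/-- The efficient influence function ψ* of Theorem 1 (labeling propensity depending on
`(t,x,s)`), centered at `d`. -/
def psiStar (X : Ω → 𝒳) (T R : Ω → ℝ) (S : Ω → 𝒮) (Y : Ω → ℝ) (e : 𝒳 → ℝ)
    (r : ℝ → 𝒳 → 𝒮 → ℝ) (mt : ℝ → 𝒳 → 𝒮 → ℝ) (mu : ℝ → 𝒳 → ℝ) (d : ℝ) : Ω → ℝ :=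
  fun ω =>
    mu 1 (X ω) - mu 0 (X ω)
      + T ω * R ω / (e (X ω) * r 1 (X ω) (S ω)) * (Y ω - mt 1 (X ω) (S ω))
      - (1 - T ω) * R ω / ((1 - e (X ω)) * r 0 (X ω) (S ω)) * (Y ω - mt 0 (X ω) (S ω))
      + T ω / e (X ω) * (mt 1 (X ω) (S ω) - mu 1 (X ω))
      - (1 - T ω) / (1 - e (X ω)) * (mt 0 (X ω) (S ω) - mu 0 (X ω))
      - d

/-- The influence function ψ_I of Settings I and II (no surrogates), centered at `d`. -/
def psiI (X : Ω → 𝒳) (T R Y : Ω → ℝ) (e : 𝒳 → ℝ) (r2 : ℝ → 𝒳 → ℝ) (mu : ℝ → 𝒳 → ℝ)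
    (d : ℝ) : Ω → ℝ :=
  fun ω =>
    mu 1 (X ω) - mu 0 (X ω)
      + T ω * R ω / (e (X ω) * r2 1 (X ω)) * (Y ω - mu 1 (X ω))
      - (1 - T ω) * R ω / ((1 - e (X ω)) * r2 0 (X ω)) * (Y ω - mu 0 (X ω))
      - d

/-- The influence function ψ_III of Setting III (labeling propensity depending on `(t,x)`),
centered at `d`. -/
def psiIII (X : Ω → 𝒳) (T R : Ω → ℝ) (S : Ω → 𝒮) (Y : Ω → ℝ) (e : 𝒳 → ℝ)
    (r2 : ℝ → 𝒳 → ℝ) (mt : ℝ → 𝒳 → 𝒮 → ℝ) (mu : ℝ → 𝒳 → ℝ) (d : ℝ) : Ω → ℝ :=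
  fun ω =>
    mu 1 (X ω) - mu 0 (X ω)
      + T ω * R ω / (e (X ω) * r2 1 (X ω)) * (Y ω - mt 1 (X ω) (S ω))
      - (1 - T ω) * R ω / ((1 - e (X ω)) * r2 0 (X ω)) * (Y ω - mt 0 (X ω) (S ω))
      + T ω / e (X ω) * (mt 1 (X ω) (S ω) - mu 1 (X ω))
      - (1 - T ω) / (1 - e (X ω)) * (mt 0 (X ω) (S ω) - mu 0 (X ω))
      - d

/-- The influence function ψ_IV of Setting IV (fully observed outcomes), centered at `d`. -/
def psiIV (X : Ω → 𝒳) (T Y : Ω → ℝ) (e : 𝒳 → ℝ) (mu : ℝ → 𝒳 → ℝ) (d : ℝ) : Ω → ℝ :=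
  fun ω =>
    mu 1 (X ω) - mu 0 (X ω)
      + T ω / e (X ω) * (Y ω - mu 1 (X ω))
      - (1 - T ω) / (1 - e (X ω)) * (Y ω - mu 0 (X ω))
      - d

/-- The influence formula ψ evaluated on a data tuple `w = (x, t, s, r, y)` with nuisances
`(e, r, μ̃, μ)`, centered at `d`. -/
def psiData {𝒳' 𝒮' : Type*} (w : 𝒳' × ℝ × 𝒮' × ℝ × ℝ) (e : 𝒳' → ℝ) (r : ℝ → 𝒳' → 𝒮' → ℝ)
    (mt : ℝ → 𝒳' → 𝒮' → ℝ) (mu : ℝ → 𝒳' → ℝ) (d : ℝ) : ℝ :=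
  mu 1 w.1 - mu 0 w.1
    + w.2.1 * w.2.2.2.1 / (e w.1 * r 1 w.1 w.2.2.1) * (w.2.2.2.2 - mt 1 w.1 w.2.2.1)
    - (1 - w.2.1) * w.2.2.2.1 / ((1 - e w.1) * r 0 w.1 w.2.2.1) * (w.2.2.2.2 - mt 0 w.1 w.2.2.1)
    + w.2.1 / e w.1 * (mt 1 w.1 w.2.2.1 - mu 1 w.1)
    - (1 - w.2.1) / (1 - e w.1) * (mt 0 w.1 w.2.2.1 - mu 0 w.1)
    - d

end Surrogate

open Surrogate

namespace SurrogateAux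

variable {Ω : Type*}

lemma measurable_comap' {α : Type*} [mα : MeasurableSpace α] (f : Ω → α) :
    @Measurable Ω α (MeasurableSpace.comap f mα) mα f := fun s hs => ⟨s, hs, rfl⟩

lemma comap_pair {α β : Type*} [mα : MeasurableSpace α] [mβ : MeasurableSpace β]
    (U : Ω → α) (V : Ω → β) :
    MeasurableSpace.comap (fun ω => (U ω, V ω)) inferInstance
      = MeasurableSpace.comap U mα ⊔ MeasurableSpace.comap V mβ := by
  have h : (inferInstance : MeasurableSpace (α × β)) = mα.comap Prod.fst ⊔ mβ.comap Prod.snd := rfl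
  rw [h, MeasurableSpace.comap_sup, MeasurableSpace.comap_comp, MeasurableSpace.comap_comp]
  rfl

lemma comap_le_comap {α β : Type*} [mα : MeasurableSpace α] [mβ : MeasurableSpace β]
    {f : Ω → α} {g : Ω → β} (φ : β → α) (hφ : Measurable φ) (h : ∀ ω, f ω = φ (g ω)) :
    MeasurableSpace.comap f mα ≤ MeasurableSpace.comap g mβ := by
  have hfg : f = φ ∘ g := funext h
  rw [hfg, ← MeasurableSpace.comap_comp]
  exact MeasurableSpace.comap_mono hφ.comap_le

lemma comap_triple {α β γ : Type*} [mα : MeasurableSpace α] [mβ : MeasurableSpace β]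
    [mγ : MeasurableSpace γ] (U : Ω → α) (V : Ω → β) (W : Ω → γ) :
    MeasurableSpace.comap (fun ω => (U ω, V ω, W ω)) inferInstance
      = MeasurableSpace.comap U mα ⊔ (MeasurableSpace.comap V mβ ⊔ MeasurableSpace.comap W mγ) := by
  refine (comap_pair U (fun ω => (V ω, W ω))).trans ?_
  rw [comap_pair V W]

lemma integrable_of_bounded [𝓕 : MeasurableSpace Ω] {P : Measure Ω} [IsProbabilityMeasure P]
    {f : Ω → ℝ} (hf : AEStronglyMeasurable f P) (C : ℝ) (h : ∀ᵐ ω ∂P, |f ω| ≤ C) :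
    Integrable f P :=
  Integrable.mono' (integrable_const C) hf (by simpa using h)

lemma integral_mul_condexp {m : MeasurableSpace Ω} [𝓕 : MeasurableSpace Ω] {P : Measure Ω}
    [IsProbabilityMeasure P] (hm : m ≤ 𝓕) {u Z : Ω → ℝ}
    (hu : StronglyMeasurable[m] u) (hZ : Integrable Z P)
    (huZ : Integrable (fun ω => u ω * Z ω) P) :
    ∫ ω, u ω * (P[Z|m]) ω ∂P = ∫ ω, u ω * Z ω ∂P := by
  have h := condExp_mul_of_stronglyMeasurable_left hu (by exact huZ) hZ
  have h1 : ∫ ω, u ω * (P[Z|m]) ω ∂P = ∫ ω, (P[u * Z|m]) ω ∂P :=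
    integral_congr_ae (h.mono fun ω hω => hω.symm)
  rw [h1, integral_condExp hm]; rfl

lemma condexp_sup_comap_of_indep {β : Type*} [mβ : MeasurableSpace β]
    {m₁ : MeasurableSpace Ω} [𝓕 : MeasurableSpace Ω] {P : Measure Ω} [IsProbabilityMeasure P]
    (hm₁ : m₁ ≤ 𝓕) {V : Ω → β} (hV : Measurable[𝓕] V)
    {Z : Ω → ℝ} (hZ : Integrable Z P)
    (hind : ∀ C : Set β, MeasurableSet C →
      (P[fun ω => Z ω * C.indicator (fun _ => (1:ℝ)) (V ω)|m₁])
        =ᵐ[P] fun ω => (P[Z|m₁]) ω * (P[fun ω' => C.indicator (fun _ => (1:ℝ)) (V ω')|m₁]) ω) :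
    P[Z|m₁ ⊔ MeasurableSpace.comap V mβ] =ᵐ[P] P[Z|m₁] := by
  have hm₂ : m₁ ⊔ MeasurableSpace.comap V mβ ≤ 𝓕 := sup_le hm₁ hV.comap_le
  set g : Ω → ℝ := P[Z|m₁] with hgdef
  have hGint : Integrable g P := integrable_condExp
  have hgen : m₁ ⊔ MeasurableSpace.comap V mβ = MeasurableSpace.generateFrom
      {s : Set Ω | ∃ A, MeasurableSet[m₁] A ∧ ∃ C, MeasurableSet C ∧ s = A ∩ V ⁻¹' C} := by
    apply le_antisymm
    · refine sup_le ?_ ?_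
      · intro A hA
        exact MeasurableSpace.measurableSet_generateFrom
          ⟨A, hA, Set.univ, MeasurableSet.univ, by simp⟩
      · rintro s ⟨C, hC, rfl⟩
        exact MeasurableSpace.measurableSet_generateFrom
          ⟨Set.univ, MeasurableSet.univ, C, hC, by simp⟩
    · refine MeasurableSpace.generateFrom_le ?_
      rintro s ⟨A, hA, C, hC, rfl⟩
      refine MeasurableSet.inter ?_ ?_
      · exact (le_sup_left : m₁ ≤ m₁ ⊔ MeasurableSpace.comap V mβ) A hA
      · exact (le_sup_right : MeasurableSpace.comap V mβ ≤ m₁ ⊔ MeasurableSpace.comap V mβ)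
          _ ⟨C, hC, rfl⟩
  have hpi : IsPiSystem
      {s : Set Ω | ∃ A, MeasurableSet[m₁] A ∧ ∃ C, MeasurableSet C ∧ s = A ∩ V ⁻¹' C} := by
    rintro s ⟨A, hA, C, hC, rfl⟩ u ⟨A', hA', C', hC', rfl⟩ -
    refine ⟨A ∩ A', hA.inter hA', C ∩ C', hC.inter hC', ?_⟩
    ext ω; simp only [Set.mem_inter_iff, Set.mem_preimage]; tauto
  have key : ∀ s, MeasurableSet[m₁ ⊔ MeasurableSpace.comap V mβ] s →
      ∫ ω in s, g ω ∂P = ∫ ω in s, Z ω ∂P := by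
    intro s hs
    refine MeasurableSpace.induction_on_inter
      (C := fun s _ => ∫ ω in s, g ω ∂P = ∫ ω in s, Z ω ∂P)
      hgen hpi ?_ ?_ ?_ ?_ s hs
    · simp
    · rintro s ⟨A, hA, C, hC, rfl⟩
      have hA' : MeasurableSet[𝓕] A := hm₁ A hA
      have hs' : MeasurableSet[𝓕] (A ∩ V ⁻¹' C) := hA'.inter (hV hC)
      set IA : Ω → ℝ := A.indicator (fun _ => (1:ℝ)) with hIAdef
      set IC : Ω → ℝ := fun ω => C.indicator (fun _ => (1:ℝ)) (V ω) with hICdef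
      have hbd : ∀ f : Ω → ℝ, ∀ ω, (A ∩ V ⁻¹' C).indicator f ω = IA ω * (IC ω * f ω) := by
        intro f ω
        by_cases h1 : ω ∈ A <;> by_cases h2 : V ω ∈ C <;>
          simp [hIAdef, hICdef, Set.indicator_apply, h1, h2, Set.mem_preimage]
      have hIAsm : StronglyMeasurable[m₁] IA :=
        (stronglyMeasurable_const (b := (1:ℝ))).indicator hA
      have hICint : Integrable IC P := by
        refine Integrable.congr ((integrable_const (1:ℝ)).indicator (hV hC)) ?_
        refine Filter.Eventually.of_forall fun ω => ?_
        by_cases h : V ω ∈ C <;>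
          simp [hICdef, Set.indicator_apply, h, Set.mem_preimage]
      have hICbd : ∀ ω, ‖IC ω‖ ≤ 1 := by
        intro ω; by_cases h : V ω ∈ C <;> simp [hICdef, Set.indicator_apply, h]
      have hIAbd : ∀ ω, ‖IA ω‖ ≤ 1 := by
        intro ω; by_cases h : ω ∈ A <;> simp [hIAdef, Set.indicator_apply, h]
      have hZ1int : Integrable (fun ω => IC ω * Z ω) P :=
        hZ.bdd_mul hICint.aestronglyMeasurable (Filter.Eventually.of_forall hICbd)
      have hIAZ1int : Integrable (fun ω => IA ω * (IC ω * Z ω)) P :=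
        hZ1int.bdd_mul ((hIAsm.mono hm₁).aestronglyMeasurable)
          (Filter.Eventually.of_forall hIAbd)
      have e1 : ∫ ω in A ∩ V ⁻¹' C, Z ω ∂P = ∫ ω, IA ω * (IC ω * Z ω) ∂P := by
        rw [← integral_indicator (μ := P) hs']
        exact integral_congr_ae (Filter.Eventually.of_forall fun ω => hbd Z ω)
      have e2 : ∫ ω in A ∩ V ⁻¹' C, g ω ∂P = ∫ ω, IA ω * (IC ω * g ω) ∂P := by
        rw [← integral_indicator (μ := P) hs']
        exact integral_congr_ae (Filter.Eventually.of_forall fun ω => hbd g ω)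
      have e3 : ∫ ω, IA ω * (IC ω * Z ω) ∂P = ∫ ω, IA ω * (P[fun ω' => IC ω' * Z ω'|m₁]) ω ∂P :=
        (integral_mul_condexp hm₁ hIAsm hZ1int hIAZ1int).symm
      have e4 : (P[fun ω' => IC ω' * Z ω'|m₁])
          =ᵐ[P] fun ω => g ω * (P[fun ω' => IC ω'|m₁]) ω := by
        refine (condExp_congr_ae
          (Filter.Eventually.of_forall fun ω => mul_comm (IC ω) (Z ω))).trans ?_
        exact hind C hC
      have hu2 : StronglyMeasurable[m₁] (fun ω => IA ω * g ω) :=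
        hIAsm.mul stronglyMeasurable_condExp
      have hu2Z2 : Integrable (fun ω => (IA ω * g ω) * IC ω) P := by
        refine Integrable.mono' hGint.norm
          (((hu2.mono hm₁).aestronglyMeasurable).mul hICint.aestronglyMeasurable) ?_
        refine Filter.Eventually.of_forall fun ω => ?_
        calc ‖IA ω * g ω * IC ω‖ = ‖IA ω‖ * ‖g ω‖ * ‖IC ω‖ := by simp [abs_mul]
          _ ≤ 1 * ‖g ω‖ * 1 := by
              have h1 := hIAbd ω; have h2 := hICbd ω
              gcongr <;> simp
          _ = ‖g ω‖ := by ring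
      have e5 : ∫ ω, IA ω * (g ω * (P[fun ω' => IC ω'|m₁]) ω) ∂P
          = ∫ ω, (IA ω * g ω) * IC ω ∂P := by
        have h := integral_mul_condexp hm₁ hu2 hICint hu2Z2
        calc ∫ ω, IA ω * (g ω * (P[fun ω' => IC ω'|m₁]) ω) ∂P
            = ∫ ω, (IA ω * g ω) * (P[fun ω' => IC ω'|m₁]) ω ∂P :=
              integral_congr_ae (Filter.Eventually.of_forall fun ω => by ring)
          _ = ∫ ω, (IA ω * g ω) * IC ω ∂P := h
      calc ∫ ω in A ∩ V ⁻¹' C, g ω ∂P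
          = ∫ ω, IA ω * (IC ω * g ω) ∂P := e2
        _ = ∫ ω, IA ω * (g ω * (P[fun ω' => IC ω'|m₁]) ω) ∂P := by
            rw [e5]
            exact integral_congr_ae (Filter.Eventually.of_forall fun ω => by ring)
        _ = ∫ ω, IA ω * (P[fun ω' => IC ω' * Z ω'|m₁]) ω ∂P := by
            refine integral_congr_ae ?_
            filter_upwards [e4] with ω hω
            rw [hω]
        _ = ∫ ω, IA ω * (IC ω * Z ω) ∂P := e3.symm
        _ = ∫ ω in A ∩ V ⁻¹' C, Z ω ∂P := e1.symm
    · intro u hu hCu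
      have hu' : MeasurableSet[𝓕] u := hm₂ u hu
      have h1 := integral_add_compl hu' hGint
      have h2 := integral_add_compl hu' hZ
      have h3 : ∫ ω, g ω ∂P = ∫ ω, Z ω ∂P := integral_condExp hm₁
      linarith
    · intro f hdisj hmeas hC
      have hm' : ∀ i, MeasurableSet[𝓕] (f i) := fun i => hm₂ _ (hmeas i)
      rw [integral_iUnion hm' hdisj hGint.integrableOn,
        integral_iUnion hm' hdisj hZ.integrableOn]
      exact tsum_congr hC
  refine (ae_eq_condExp_of_forall_setIntegral_eq hm₂ hZ
    (fun s _ _ => hGint.integrableOn) (fun s hs _ => key s hs) ?_).symm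
  exact (StronglyMeasurable.mono (stronglyMeasurable_condExp : StronglyMeasurable[m₁] g)
    (le_sup_left : m₁ ≤ m₁ ⊔ MeasurableSpace.comap V mβ)).aestronglyMeasurable

lemma abs_mul_le' {a b c d : ℝ} (h1 : |a| ≤ c) (h2 : |b| ≤ d) : |a * b| ≤ c * d := by
  rw [abs_mul]
  exact mul_le_mul h1 h2 (abs_nonneg _) (le_trans (abs_nonneg _) h1)

lemma condexp_mem_Icc {Ω : Type*} {m : MeasurableSpace Ω} [𝓕 : MeasurableSpace Ω] {P : Measure Ω}
    [IsProbabilityMeasure P] (hm : m ≤ 𝓕) {R : Ω → ℝ} (hR : Integrable R P)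
    (h01 : ∀ ω, 0 ≤ R ω ∧ R ω ≤ 1) :
    ∀ᵐ ω ∂P, 0 ≤ (P[R|m]) ω ∧ (P[R|m]) ω ≤ 1 := by
  have h0 := condExp_nonneg (μ := P) (m := m)
    (Filter.Eventually.of_forall fun ω => (h01 ω).1)
  have h1 := condExp_mono (m := m) hR (integrable_const 1)
    (Filter.Eventually.of_forall fun ω => (h01 ω).2)
  rw [condExp_const hm] at h1
  filter_upwards [h0, h1] with ω a b
  exact ⟨a, b⟩

end SurrogateAux

open SurrogateAux


/-- Identification without surrogates on the unlabelled data (Settings I and II):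
under Assumptions 1, 2 and 3, `E[Y(t)] = E[h_t(X)]` for any measurable `h_t` agreeing a.s. on
`{T = t, R = 1}` with `E[ν(T,X,S)|σ(T,X,R)]`, and `E[Y(t)] = E[m_t(X)]` for any measurable `m_t`
agreeing a.s. on `{T = t, R = 1}` with `E[Y|σ(T,X,R)]`. -/
theorem statement2
    {Ω 𝒳 𝒮 : Type*} [MeasurableSpace Ω] [MeasurableSpace 𝒳] [MeasurableSpace 𝒮]
    [StandardBorelSpace 𝒳] [StandardBorelSpace 𝒮]
    (P : Measure Ω) [IsProbabilityMeasure P]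
    -- the random variables of the model
    (X : Ω → 𝒳) (T R : Ω → ℝ) (S0 S1 : Ω → 𝒮) (Y0 Y1 : Ω → ℝ)
    (hX : Measurable X) (hT : Measurable T) (hR : Measurable R)
    (hS0 : Measurable S0) (hS1 : Measurable S1)
    (hY0 : Measurable Y0) (hY1 : Measurable Y1)
    (hT01 : ∀ ω, T ω = 0 ∨ T ω = 1) (hR01 : ∀ ω, R ω = 0 ∨ R ω = 1)
    -- the treatment propensity e* (note that E[T|σ(X)] = P(T=1|σ(X)))
    (e : 𝒳 → ℝ) (he : Measurable e) (heRange : ∀ x, e x ∈ Set.Icc (0 : ℝ) 1)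
    (heSpec : (fun ω => e (X ω)) =ᵐ[P] P[T|mX X])
    -- the labeling propensity r* (note that E[R|σ(T,X,S)] = P(R=1|σ(T,X,S)))
    (r : ℝ → 𝒳 → 𝒮 → ℝ) (hr : Measurable fun p : ℝ × 𝒳 × 𝒮 => r p.1 p.2.1 p.2.2)
    (hrRange : ∀ t x s, r t x s ∈ Set.Icc (0 : ℝ) 1)
    (hrSpec : (fun ω => r (T ω) (X ω) (obs T S0 S1 ω)) =ᵐ[P] P[R|m3 T X (obs T S0 S1)])
    -- Assumption 1 (unconfoundedness)
    (h1i : ∀ t : ℝ, t = 0 ∨ t = 1 →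
      CondIndepBdd P (mX X) (fun ω => (pot Y0 Y1 t ω, pot S0 S1 t ω)) T)
    (h1ii : ∀ t : ℝ, t = 0 ∨ t = 1 → ∀ g : ℝ → ℝ, Measurable g → Bdd g →
      ∀ᵐ ω ∂P, T ω = t →
        (P[fun ω' => R ω' * g (pot Y0 Y1 t ω')|m3 X T (pot S0 S1 t)]) ω
          = (P[R|m3 X T (pot S0 S1 t)]) ω
            * (P[fun ω' => g (pot Y0 Y1 t ω')|m3 X T (pot S0 S1 t)]) ω)
    -- Assumption 2 (strict overlap)
    (ε : ℝ) (hε0 : 0 < ε) (hε : ε < 1 / 2)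
    (h2e : ∀ᵐ ω ∂P, ε ≤ e (X ω) ∧ e (X ω) ≤ 1 - ε)
    (h2r : ∀ t : ℝ, t = 0 ∨ t = 1 → ∀ᵐ ω ∂P, ε ≤ r t (X ω) (pot S0 S1 t ω))
    -- Assumption 3
    (h3 : ∀ t : ℝ, t = 0 ∨ t = 1 → CondIndepBdd P (m2 T X) R (pot S0 S1 t))
    -- Y(0), Y(1) ∈ L¹(P)
    (hY0int : Integrable Y0 P) (hY1int : Integrable Y1 P)
    -- the labelled-data outcome regression ν
    (ν : ℝ → 𝒳 → 𝒮 → ℝ) (hν : Measurable fun p : ℝ × 𝒳 × 𝒮 => ν p.1 p.2.1 p.2.2)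
    (hνSpec : ∀ᵐ ω ∂P, R ω = 1 →
      ν (T ω) (X ω) (obs T S0 S1 ω) = (P[obs T Y0 Y1|m4 T X (obs T S0 S1) R]) ω)
    :
    ∀ t : ℝ, t = 0 ∨ t = 1 →
      (∀ h : 𝒳 → ℝ, Measurable h →
        (∀ᵐ ω ∂P, T ω = t ∧ R ω = 1 →
          h (X ω) = (P[fun ω' => ν (T ω') (X ω') (obs T S0 S1 ω')|m3 T X R]) ω) →
        ∫ ω, pot Y0 Y1 t ω ∂P = ∫ ω, h (X ω) ∂P)
      ∧ (∀ m : 𝒳 → ℝ, Measurable m →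
        (∀ᵐ ω ∂P, T ω = t ∧ R ω = 1 →
          m (X ω) = (P[obs T Y0 Y1|m3 T X R]) ω) →
        ∫ ω, pot Y0 Y1 t ω ∂P = ∫ ω, m (X ω) ∂P) := by
  classical
  intro t ht
  set St : Ω → 𝒮 := pot S0 S1 t with hStdef
  set Yt : Ω → ℝ := pot Y0 Y1 t with hYtdef
  set Sobs : Ω → 𝒮 := obs T S0 S1 with hSobsdef
  set Yobs : Ω → ℝ := obs T Y0 Y1 with hYobsdef
  set χ : Ω → ℝ := fun ω => if T ω = t then 1 else 0 with hχdef
  -- measurability of the composite variables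
  have hStM : Measurable St := by rw [hStdef]; unfold pot; split <;> assumption
  have hYtM : Measurable Yt := by rw [hYtdef]; unfold pot; split <;> assumption
  have hSobsM : Measurable Sobs := by
    rw [hSobsdef]; unfold obs
    exact Measurable.ite (hT (measurableSet_singleton 1)) hS1 hS0
  have hYobsM : Measurable Yobs := by
    rw [hYobsdef]; unfold obs
    exact Measurable.ite (hT (measurableSet_singleton 1)) hY1 hY0
  have hYtint : Integrable Yt P := by rw [hYtdef]; unfold pot; split <;> assumption
  have hYobsInt : Integrable Yobs P := by
    refine Integrable.mono' (hY0int.abs.add hY1int.abs) hYobsM.aestronglyMeasurable ?_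
    refine Filter.Eventually.of_forall fun ω => ?_
    rw [hYobsdef]; unfold obs; split <;> rw [Real.norm_eq_abs]
    · exact le_add_of_nonneg_left (abs_nonneg _)
    · exact le_add_of_nonneg_right (abs_nonneg _)
  have hind : Measurable (fun x : ℝ => if x = t then (1:ℝ) else 0) := by
    have h : (fun x : ℝ => if x = t then (1:ℝ) else 0) = Set.indicator {t} (fun _ => 1) := by
      funext x; by_cases h : x = t <;> simp [h]
    rw [h]; exact measurable_const.indicator (measurableSet_singleton t)
  have hχM : Measurable χ := by rw [hχdef]; exact hind.comp hT
  -- coordinate measurability w.r.t. the comap σ-algebras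
  have hTmTX : Measurable[m2 T X] T := measurable_fst.comp (measurable_comap' _)
  have hTm3R : Measurable[m3 T X R] T := measurable_fst.comp (measurable_comap' _)
  have hRm3R : Measurable[m3 T X R] R :=
    (measurable_snd.comp measurable_snd).comp (measurable_comap' _)
  have hTmS' : Measurable[m3 X T St] T :=
    (measurable_fst.comp measurable_snd).comp (measurable_comap' _)
  have hTmSobs : Measurable[m3 T X Sobs] T := measurable_fst.comp (measurable_comap' _)
  have hTm4 : Measurable[m4 T X Sobs R] T := measurable_fst.comp (measurable_comap' _)
  have hRm4 : Measurable[m4 T X Sobs R] R :=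
    (measurable_snd.comp (measurable_snd.comp measurable_snd)).comp (measurable_comap' _)
  have hXmx : Measurable[mX X] X := measurable_comap' _
  -- χ measurable w.r.t. any σ-algebra making T measurable
  have hχm : ∀ m : MeasurableSpace Ω, Measurable[m] T → Measurable[m] χ := by
    intro m hTm; rw [hχdef]; exact hind.comp hTm
  -- σ-algebra comparisons
  have hmxF : mX X ≤ ‹MeasurableSpace Ω› := hX.comap_le
  have hmTXF : m2 T X ≤ ‹MeasurableSpace Ω› := (hT.prodMk hX).comap_le
  have hm3RF : m3 T X R ≤ ‹MeasurableSpace Ω› := (hT.prodMk (hX.prodMk hR)).comap_le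
  have hmS'F : m3 X T St ≤ ‹MeasurableSpace Ω› := (hX.prodMk (hT.prodMk hStM)).comap_le
  have hmSobsF : m3 T X Sobs ≤ ‹MeasurableSpace Ω› := (hT.prodMk (hX.prodMk hSobsM)).comap_le
  have hm4F : m4 T X Sobs R ≤ ‹MeasurableSpace Ω› :=
    (hT.prodMk (hX.prodMk (hSobsM.prodMk hR))).comap_le
  have hmx_le_mTX : mX X ≤ m2 T X :=
    comap_le_comap Prod.snd measurable_snd (fun ω => rfl)
  have hmx_le_m3R : mX X ≤ m3 T X R :=
    comap_le_comap (fun p => p.2.1) (measurable_fst.comp measurable_snd) (fun ω => rfl)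
  have hmTX_le_m3R : m2 T X ≤ m3 T X R :=
    comap_le_comap (fun p => (p.1, p.2.1))
      (measurable_fst.prodMk (measurable_fst.comp measurable_snd)) (fun ω => rfl)
  have hmx_le_mS' : mX X ≤ m3 X T St :=
    comap_le_comap Prod.fst measurable_fst (fun ω => rfl)
  have hmTX_le_mS' : m2 T X ≤ m3 X T St :=
    comap_le_comap (fun p => (p.2.1, p.1))
      ((measurable_fst.comp measurable_snd).prodMk measurable_fst) (fun ω => rfl)
  have hmx_le_mSobs : mX X ≤ m3 T X Sobs :=
    comap_le_comap (fun p => p.2.1) (measurable_fst.comp measurable_snd) (fun ω => rfl)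
  have hmTX_le_mSobs : m2 T X ≤ m3 T X Sobs :=
    comap_le_comap (fun p => (p.1, p.2.1))
      (measurable_fst.prodMk (measurable_fst.comp measurable_snd)) (fun ω => rfl)
  have hmx_le_m4 : mX X ≤ m4 T X Sobs R :=
    comap_le_comap (fun p => p.2.1) (measurable_fst.comp measurable_snd) (fun ω => rfl)
  -- pointwise observed = potential on {T = t}
  have hobsS : ∀ ω, T ω = t → Sobs ω = St ω := by
    intro ω hω; rw [hSobsdef, hStdef]; unfold obs pot
    rcases ht with h | h <;> subst h <;> norm_num [hω]
  have hobsY : ∀ ω, T ω = t → Yobs ω = Yt ω := by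
    intro ω hω; rw [hYobsdef, hYtdef]; unfold obs pot
    rcases ht with h | h <;> subst h <;> norm_num [hω]
  -- elementary χ facts
  have hχ1 : ∀ ω, T ω = t → χ ω = 1 := by intro ω hω; rw [hχdef]; simp [hω]
  have hχ0 : ∀ ω, T ω ≠ t → χ ω = 0 := by intro ω hω; rw [hχdef]; simp [hω]
  have hχ01 : ∀ ω, 0 ≤ χ ω ∧ χ ω ≤ 1 := by
    intro ω; rw [hχdef]; dsimp only; split <;> norm_num
  have hR01' : ∀ ω, 0 ≤ R ω ∧ R ω ≤ 1 := by
    intro ω; rcases hR01 ω with h | h <;> rw [h] <;> norm_num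
  have hχRz : ∀ ω, ¬(T ω = t ∧ R ω = 1) → χ ω * R ω = 0 := by
    intro ω h
    by_cases hTt : T ω = t
    · rcases hR01 ω with h0 | h1
      · rw [h0, mul_zero]
      · exact absurd ⟨hTt, h1⟩ h
    · rw [hχ0 ω hTt, zero_mul]
  have hχR1 : ∀ ω, (T ω = t ∧ R ω = 1) → χ ω * R ω = 1 := by
    intro ω ⟨h1, h2⟩; rw [hχ1 ω h1, h2, mul_one]
  -- integrability of bounded variables
  have hRint : Integrable R P := integrable_of_bounded hR.aestronglyMeasurable 1
    (Filter.Eventually.of_forall fun ω => by rcases hR01 ω with h | h <;> simp [h])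
  have hTint : Integrable T P := integrable_of_bounded hT.aestronglyMeasurable 1
    (Filter.Eventually.of_forall fun ω => by rcases hT01 ω with h | h <;> simp [h])
  have hχint : Integrable χ P := integrable_of_bounded hχM.aestronglyMeasurable 1
    (Filter.Eventually.of_forall fun ω => by
      rcases hχ01 ω with ⟨h0, h1⟩; rw [abs_le]; constructor <;> linarith)
  have hχRM : Measurable (fun ω => χ ω * R ω) := hχM.mul hR
  have hχRbd : ∀ ω, 0 ≤ χ ω * R ω ∧ χ ω * R ω ≤ 1 := by
    intro ω
    rcases hχ01 ω with ⟨a0, a1⟩; rcases hR01' ω with ⟨b0, b1⟩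
    constructor
    · exact mul_nonneg a0 b0
    · calc χ ω * R ω ≤ 1 * 1 := by gcongr
        _ = 1 := by ring
  have hχRint : Integrable (fun ω => χ ω * R ω) P :=
    integrable_of_bounded hχRM.aestronglyMeasurable 1
      (Filter.Eventually.of_forall fun ω => by
        rcases hχRbd ω with ⟨h0, h1⟩; rw [abs_le]; constructor <;> linarith)
  -- the labelling propensity given (T,X,S) is ≥ ε a.e.
  set ρS : Ω → ℝ := P[R|m3 T X Sobs] with hρSdef
  have hρSge : ∀ᵐ ω ∂P, ε ≤ ρS ω := by
    filter_upwards [hrSpec, h2r 0 (Or.inl rfl), h2r 1 (Or.inr rfl)] with ω h1 h2 h3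
    rw [← h1]
    rcases hT01 ω with h | h
    · have hs : Sobs ω = pot S0 S1 0 ω := by
        rw [hSobsdef]; unfold obs pot; norm_num [h]
      rw [h, hs]; exact h2
    · have hs : Sobs ω = pot S0 S1 1 ω := by
        rw [hSobsdef]; unfold obs pot; norm_num [h]
      rw [h, hs]; exact h3
  -- q := P(T = t, R = 1 | X)
  set q : Ω → ℝ := P[fun ω => χ ω * R ω|mX X] with hqdef
  have hqsm : StronglyMeasurable[mX X] q := stronglyMeasurable_condExp
  have hq_le1 : ∀ᵐ ω ∂P, q ω ≤ 1 := by
    have h := condExp_mono (μ := P) (m := mX X) hχRint (integrable_const 1)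
      (Filter.Eventually.of_forall fun ω => (hχRbd ω).2)
    rw [condExp_const hmxF] at h
    filter_upwards [h] with ω hω using hω
  have hSobs_pull : P[fun ω => χ ω * R ω|m3 T X Sobs] =ᵐ[P] fun ω => χ ω * ρS ω := by
    exact condExp_mul_of_stronglyMeasurable_left ((hχm _ hTmSobs).stronglyMeasurable)
      (by exact hχRint) hRint
  have hq_ge : ∀ᵐ ω ∂P, ε ^ 2 ≤ q ω := by
    have htow : q =ᵐ[P] P[P[fun ω => χ ω * R ω|m3 T X Sobs]|mX X] :=
      (condExp_condExp_of_le hmx_le_mSobs hmSobsF).symm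
    have h1 : q =ᵐ[P] P[fun ω => χ ω * ρS ω|mX X] :=
      htow.trans (condExp_congr_ae hSobs_pull)
    have hχρSint : Integrable (fun ω => χ ω * ρS ω) P :=
      Integrable.congr integrable_condExp hSobs_pull
    have hεχint : Integrable (fun ω => ε * χ ω) P := hχint.const_mul ε
    have hmono : ∀ᵐ ω ∂P, ε * χ ω ≤ χ ω * ρS ω := by
      filter_upwards [hρSge] with ω hω
      rcases hχ01 ω with ⟨h0, _⟩
      calc ε * χ ω ≤ ρS ω * χ ω := mul_le_mul_of_nonneg_right hω h0
        _ = χ ω * ρS ω := mul_comm _ _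
    have h2 := condExp_mono (m := mX X) hεχint hχρSint hmono
    have h3 : P[fun ω => ε * χ ω|mX X] =ᵐ[P] fun ω => ε * (P[χ|mX X]) ω :=
      condExp_smul (μ := P) (m := mX X) ε χ
    have h4 : ∀ᵐ ω ∂P, ε ≤ (P[χ|mX X]) ω := by
      rcases ht with h | h
      · subst h
        have hfun : χ = fun ω => (1:ℝ) - T ω := by
          funext ω; rw [hχdef]; dsimp only
          rcases hT01 ω with h0 | h0 <;> simp [h0]
        have hsub : P[χ|mX X] =ᵐ[P] fun ω => 1 - (P[T|mX X]) ω := by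
          rw [hfun]
          have heq : (fun ω => (1:ℝ) - T ω) = (fun _ => (1:ℝ)) - T := rfl
          rw [heq]
          refine (condExp_sub (integrable_const (1:ℝ)) hTint (mX X)).trans ?_
          rw [condExp_const hmxF]
          exact Filter.Eventually.of_forall fun ω => rfl
        filter_upwards [hsub, heSpec, h2e] with ω hω he' h2e'
        rw [hω, ← he']
        linarith [h2e'.2]
      · subst h
        have hfun : χ = T := by
          funext ω; rw [hχdef]; dsimp only
          rcases hT01 ω with h0 | h0 <;> simp [h0]
        rw [hfun]
        filter_upwards [heSpec, h2e] with ω he' h2e'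
        rw [← he']
        exact h2e'.1
    filter_upwards [h1, h2, h3, h4] with ω hq1 hq2 hq3 hq4
    rw [hq1]
    rw [hq3] at hq2
    nlinarith [hε0.le]
  -- the clamped version qc and its inverse B
  have hε2pos : (0:ℝ) < ε ^ 2 := by positivity
  have hε2le1 : ε ^ 2 ≤ 1 := by nlinarith
  set qc : Ω → ℝ := fun ω => max (min (q ω) 1) (ε ^ 2) with hqcdef
  have hqc_ge : ∀ ω, ε ^ 2 ≤ qc ω := fun ω => le_max_right _ _
  have hqc_pos : ∀ ω, 0 < qc ω := fun ω => lt_of_lt_of_le hε2pos (hqc_ge ω)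
  have hqc_le1 : ∀ ω, qc ω ≤ 1 := fun ω => max_le (min_le_right _ _) hε2le1
  have hqc_eq : qc =ᵐ[P] q := by
    filter_upwards [hq_ge, hq_le1] with ω hh1 hh2
    rw [hqcdef]; dsimp only; rw [min_eq_left hh2, max_eq_left hh1]
  have hqcsm : StronglyMeasurable[mX X] qc :=
    ((hqsm.measurable.min measurable_const).max measurable_const).stronglyMeasurable
  set B : Ω → ℝ := fun ω => (qc ω)⁻¹ with hBdef
  have hBsm : StronglyMeasurable[mX X] B := hqcsm.measurable.inv.stronglyMeasurable
  have hB_pos : ∀ ω, 0 < B ω := fun ω => inv_pos.mpr (hqc_pos ω)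
  have hB_le : ∀ ω, B ω ≤ (ε ^ 2)⁻¹ := by
    intro ω; rw [hBdef]; dsimp only
    exact inv_anti₀ hε2pos (hqc_ge ω)
  have hBqc : ∀ ω, B ω * qc ω = 1 := fun ω => inv_mul_cancel₀ (ne_of_gt (hqc_pos ω))
  have hB_abs : ∀ ω, |B ω| ≤ (ε ^ 2)⁻¹ := by
    intro ω; rw [abs_of_pos (hB_pos ω)]; exact hB_le ω
  -- Core reduction: if H is an mX-measurable version of E[N|T,X,R] on {T=t, R=1},
  -- then ∫ H = ∫ χ R B N.
  have coreC : ∀ N : Ω → ℝ, Integrable N P →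
      ∀ H : Ω → ℝ, StronglyMeasurable[mX X] H →
      (∀ᵐ ω ∂P, T ω = t ∧ R ω = 1 → H ω = (P[N|m3 T X R]) ω) →
      ∫ ω, H ω ∂P = ∫ ω, χ ω * R ω * B ω * N ω ∂P := by
    intro N hNint H hHsm hH
    have hχRBsm : StronglyMeasurable[m3 T X R] (fun ω => χ ω * R ω * B ω) :=
      (((hχm _ hTm3R).mul hRm3R).stronglyMeasurable).mul (hBsm.mono hmx_le_m3R)
    have hχRB_abs : ∀ ω, |χ ω * R ω * B ω| ≤ (ε ^ 2)⁻¹ := by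
      intro ω
      rw [abs_mul]
      calc |χ ω * R ω| * |B ω| ≤ 1 * (ε ^ 2)⁻¹ := by
            refine mul_le_mul ?_ (hB_abs ω) (abs_nonneg _) zero_le_one
            rw [abs_of_nonneg (hχRbd ω).1]; exact (hχRbd ω).2
        _ = (ε ^ 2)⁻¹ := one_mul _
    have hMint : Integrable (P[N|m3 T X R]) P := integrable_condExp
    have huNint : Integrable (fun ω => (χ ω * R ω * B ω) * N ω) P :=
      hNint.bdd_mul ((hχRBsm.mono hm3RF).aestronglyMeasurable)
        (Filter.Eventually.of_forall fun ω => by rw [Real.norm_eq_abs]; exact hχRB_abs ω)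
    have e_a : ∫ ω, (χ ω * R ω * B ω) * (P[N|m3 T X R]) ω ∂P
        = ∫ ω, (χ ω * R ω * B ω) * N ω ∂P :=
      integral_mul_condexp hm3RF hχRBsm hNint huNint
    have hχRH_eq : (fun ω => χ ω * R ω * H ω)
        =ᵐ[P] fun ω => χ ω * R ω * (P[N|m3 T X R]) ω := by
      filter_upwards [hH] with ω hω
      by_cases hc : T ω = t ∧ R ω = 1
      · rw [hω hc]
      · rw [hχRz ω hc]; ring
    have hχRMint : Integrable (fun ω => χ ω * R ω * (P[N|m3 T X R]) ω) P :=
      hMint.bdd_mul hχRM.aestronglyMeasurable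
        (Filter.Eventually.of_forall fun ω => by
          rw [Real.norm_eq_abs, abs_of_nonneg (hχRbd ω).1]; exact (hχRbd ω).2)
    have hχRHint : Integrable (fun ω => χ ω * R ω * H ω) P :=
      Integrable.congr hχRMint hχRH_eq.symm
    have hBχRHint : Integrable (fun ω => B ω * (χ ω * R ω * H ω)) P :=
      hχRHint.bdd_mul ((hBsm.mono hmxF).aestronglyMeasurable)
        (Filter.Eventually.of_forall fun ω => by rw [Real.norm_eq_abs]; exact hB_abs ω)
    have e_d : ∫ ω, B ω * (P[fun ω' => χ ω' * R ω' * H ω'|mX X]) ω ∂P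
        = ∫ ω, B ω * (χ ω * R ω * H ω) ∂P :=
      integral_mul_condexp hmxF hBsm hχRHint hBχRHint
    have hHχR_int : Integrable (fun ω => H ω * (χ ω * R ω)) P :=
      Integrable.congr hχRHint (Filter.Eventually.of_forall fun ω => by ring)
    have e_e : P[fun ω' => χ ω' * R ω' * H ω'|mX X] =ᵐ[P] fun ω => H ω * q ω := by
      have h0 : (fun ω' => χ ω' * R ω' * H ω') = fun ω' => H ω' * (χ ω' * R ω') := by
        funext ω; ring
      rw [h0]
      have h1 := condExp_mul_of_stronglyMeasurable_left hHsm (by exact hHχR_int) hχRint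
      exact h1.trans (Filter.Eventually.of_forall fun ω => rfl)
    calc ∫ ω, H ω ∂P
        = ∫ ω, B ω * (H ω * qc ω) ∂P := by
          refine integral_congr_ae (Filter.Eventually.of_forall fun ω => ?_)
          show H ω = B ω * (H ω * qc ω)
          have h2 : B ω * (H ω * qc ω) = H ω * (B ω * qc ω) := by ring
          rw [h2, hBqc ω, mul_one]
      _ = ∫ ω, B ω * (H ω * q ω) ∂P := by
          refine integral_congr_ae ?_
          filter_upwards [hqc_eq] with ω hω
          rw [hω]
      _ = ∫ ω, B ω * (P[fun ω' => χ ω' * R ω' * H ω'|mX X]) ω ∂P := by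
          refine integral_congr_ae ?_
          filter_upwards [e_e] with ω hω
          rw [hω]
      _ = ∫ ω, B ω * (χ ω * R ω * H ω) ∂P := e_d
      _ = ∫ ω, (χ ω * R ω * B ω) * (P[N|m3 T X R]) ω ∂P := by
          refine integral_congr_ae ?_
          filter_upwards [hχRH_eq] with ω hω
          rw [show B ω * (χ ω * R ω * H ω) = (χ ω * R ω * H ω) * B ω from by ring, hω]
          ring
      _ = ∫ ω, χ ω * R ω * B ω * N ω ∂P := e_a
  -- uniform bounds (used repeatedly)
  have hχ_abs : ∀ ω, |χ ω| ≤ 1 := fun ω => by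
    rw [abs_of_nonneg (hχ01 ω).1]; exact (hχ01 ω).2
  have hR_abs : ∀ ω, |R ω| ≤ 1 := fun ω => by
    rw [abs_of_nonneg (hR01' ω).1]; exact (hR01' ω).2
  have hχB_abs : ∀ ω, |χ ω * B ω| ≤ (ε ^ 2)⁻¹ := fun ω => by
    have := abs_mul_le' (hχ_abs ω) (hB_abs ω); simpa using this
  have hχBR_abs : ∀ ω, |χ ω * B ω * R ω| ≤ (ε ^ 2)⁻¹ := fun ω => by
    have := abs_mul_le' (hχB_abs ω) (hR_abs ω); simpa using this
  have hCabs : ∀ ω, |χ ω * R ω * B ω| ≤ (ε ^ 2)⁻¹ := fun ω => by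
    have h : χ ω * R ω * B ω = χ ω * B ω * R ω := by ring
    rw [h]; exact hχBR_abs ω
  -- truncation functions
  set gtr : ℕ → ℝ → ℝ := fun n y => max (-(n : ℝ)) (min y (n : ℝ)) with hgtrdef
  have hgtrM : ∀ n, Measurable (gtr n) := by
    intro n; rw [hgtrdef]
    exact measurable_const.max (measurable_id.min measurable_const)
  have hgtr_absle : ∀ (n : ℕ) (y : ℝ), |gtr n y| ≤ |y| := by
    intro n y; rw [hgtrdef]; dsimp only; rw [abs_le]
    constructor
    · rcases le_or_gt 0 y with h | h
      · refine le_max_of_le_right ?_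
        exact le_trans (neg_nonpos.mpr (abs_nonneg y)) (le_min h (Nat.cast_nonneg n))
      · refine le_max_of_le_right ?_
        rw [abs_of_neg h, neg_neg]
        exact le_min le_rfl (le_trans h.le (Nat.cast_nonneg n))
    · exact max_le (le_trans (neg_nonpos.mpr (Nat.cast_nonneg n)) (abs_nonneg y))
        (le_trans (min_le_left y _) (le_abs_self y))
  have hgtr_bd : ∀ (n : ℕ) (y : ℝ), |gtr n y| ≤ (n : ℝ) := by
    intro n y; rw [hgtrdef]; dsimp only; rw [abs_le]
    exact ⟨le_max_left _ _, max_le (neg_le_self (Nat.cast_nonneg n)) (min_le_right y _)⟩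
  have hgtr_tend : ∀ y : ℝ, Filter.Tendsto (fun n : ℕ => gtr n y) Filter.atTop (nhds y) := by
    intro y
    refine tendsto_atTop_of_eventually_const (i₀ := ⌈|y|⌉₊) fun n hn => ?_
    rw [hgtrdef]; dsimp only
    have hy : |y| ≤ (n : ℝ) := le_trans (Nat.le_ceil _) (Nat.cast_le.mpr hn)
    rw [abs_le] at hy
    rw [min_eq_left hy.2, max_eq_right hy.1]
  have hgtrYint : ∀ n : ℕ, Integrable (fun ω => gtr n (Yt ω)) P := by
    intro n
    exact integrable_of_bounded ((hgtrM n).comp hYtM).aestronglyMeasurable ((n : ℝ))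
      (Filter.Eventually.of_forall fun ω => hgtr_bd n (Yt ω))
  -- Step 1: MAR given (X,T,S(t)) lets us replace R by ρ' := P[R|σ(X,T,S(t))]
  have hρ'01 : ∀ᵐ ω ∂P, 0 ≤ (P[R|m3 X T St]) ω ∧ (P[R|m3 X T St]) ω ≤ 1 :=
    condexp_mem_Icc hmS'F hRint hR01'
  have step1 : ∫ ω, χ ω * B ω * R ω * Yt ω ∂P
      = ∫ ω, χ ω * B ω * (P[R|m3 X T St]) ω * Yt ω ∂P := by
    have hu1sm : StronglyMeasurable[m3 X T St] (fun ω => χ ω * B ω) :=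
      ((hχm _ hTmS').stronglyMeasurable).mul (hBsm.mono hmx_le_mS')
    have hEn : ∀ n : ℕ, ∫ ω, χ ω * B ω * R ω * gtr n (Yt ω) ∂P
        = ∫ ω, χ ω * B ω * (P[R|m3 X T St]) ω * gtr n (Yt ω) ∂P := by
      intro n
      have hmar := h1ii t ht (gtr n) (hgtrM n) ⟨(n : ℝ), fun y => hgtr_bd n y⟩
      rw [← hStdef, ← hYtdef] at hmar
      have hZ1int : Integrable (fun ω => R ω * gtr n (Yt ω)) P :=
        integrable_of_bounded ((hR.mul ((hgtrM n).comp hYtM)).aestronglyMeasurable) (1 * (n : ℝ))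
          (Filter.Eventually.of_forall fun ω =>
            abs_mul_le' (hR_abs ω) (hgtr_bd n (Yt ω)))
      have hu1Z1int : Integrable (fun ω => (χ ω * B ω) * (R ω * gtr n (Yt ω))) P :=
        hZ1int.bdd_mul ((hu1sm.mono hmS'F).aestronglyMeasurable)
          (Filter.Eventually.of_forall fun ω => by rw [Real.norm_eq_abs]; exact hχB_abs ω)
      have hL : ∫ ω, (χ ω * B ω) * (P[fun ω' => R ω' * gtr n (Yt ω')|m3 X T St]) ω ∂P
          = ∫ ω, (χ ω * B ω) * (R ω * gtr n (Yt ω)) ∂P :=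
        integral_mul_condexp hmS'F hu1sm hZ1int hu1Z1int
      have hu2sm : StronglyMeasurable[m3 X T St] (fun ω => χ ω * B ω * (P[R|m3 X T St]) ω) :=
        hu1sm.mul stronglyMeasurable_condExp
      have hu2Z2int : Integrable
          (fun ω => (χ ω * B ω * (P[R|m3 X T St]) ω) * gtr n (Yt ω)) P :=
        (hgtrYint n).bdd_mul ((hu2sm.mono hmS'F).aestronglyMeasurable)
          (by
            filter_upwards [hρ'01] with ω hb
            rw [Real.norm_eq_abs]
            have h2 : |(P[R|m3 X T St]) ω| ≤ 1 := by
              rw [abs_of_nonneg hb.1]; exact hb.2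
            have := abs_mul_le' (hχB_abs ω) h2
            simpa using this)
      have hRmid : ∫ ω, (χ ω * B ω * (P[R|m3 X T St]) ω)
            * (P[fun ω' => gtr n (Yt ω')|m3 X T St]) ω ∂P
          = ∫ ω, (χ ω * B ω * (P[R|m3 X T St]) ω) * gtr n (Yt ω) ∂P :=
        integral_mul_condexp hmS'F hu2sm (hgtrYint n) hu2Z2int
      have hae : (fun ω => (χ ω * B ω) * (P[fun ω' => R ω' * gtr n (Yt ω')|m3 X T St]) ω)
          =ᵐ[P] fun ω => (χ ω * B ω * (P[R|m3 X T St]) ω)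
            * (P[fun ω' => gtr n (Yt ω')|m3 X T St]) ω := by
        filter_upwards [hmar] with ω hω
        by_cases hc : T ω = t
        · rw [hω hc]; ring
        · rw [hχ0 ω hc]; ring
      calc ∫ ω, χ ω * B ω * R ω * gtr n (Yt ω) ∂P
          = ∫ ω, (χ ω * B ω) * (R ω * gtr n (Yt ω)) ∂P :=
            integral_congr_ae (Filter.Eventually.of_forall fun ω => by
              show χ ω * B ω * R ω * gtr n (Yt ω) = (χ ω * B ω) * (R ω * gtr n (Yt ω))
              ring)
        _ = ∫ ω, (χ ω * B ω) * (P[fun ω' => R ω' * gtr n (Yt ω')|m3 X T St]) ω ∂P := hL.symm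
        _ = ∫ ω, (χ ω * B ω * (P[R|m3 X T St]) ω)
              * (P[fun ω' => gtr n (Yt ω')|m3 X T St]) ω ∂P := integral_congr_ae hae
        _ = ∫ ω, (χ ω * B ω * (P[R|m3 X T St]) ω) * gtr n (Yt ω) ∂P := hRmid
        _ = ∫ ω, χ ω * B ω * (P[R|m3 X T St]) ω * gtr n (Yt ω) ∂P := rfl
    -- dominated convergence on both sides
    have hbound_int : Integrable (fun ω => (ε ^ 2)⁻¹ * |Yt ω|) P := hYtint.abs.const_mul _
    have ht1 : Filter.Tendsto (fun n : ℕ => ∫ ω, χ ω * B ω * R ω * gtr n (Yt ω) ∂P)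
        Filter.atTop (nhds (∫ ω, χ ω * B ω * R ω * Yt ω ∂P)) := by
      refine tendsto_integral_of_dominated_convergence _ ?_ hbound_int ?_ ?_
      · intro n
        exact (((hχM.mul (hBsm.mono hmxF).measurable).mul hR).mul
          ((hgtrM n).comp hYtM)).aestronglyMeasurable
      · intro n
        refine Filter.Eventually.of_forall fun ω => ?_
        rw [Real.norm_eq_abs]
        exact abs_mul_le' (hχBR_abs ω) (hgtr_absle n (Yt ω))
      · exact Filter.Eventually.of_forall fun ω =>
          (hgtr_tend (Yt ω)).const_mul (χ ω * B ω * R ω)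
    have ht2 : Filter.Tendsto
        (fun n : ℕ => ∫ ω, χ ω * B ω * (P[R|m3 X T St]) ω * gtr n (Yt ω) ∂P)
        Filter.atTop (nhds (∫ ω, χ ω * B ω * (P[R|m3 X T St]) ω * Yt ω ∂P)) := by
      refine tendsto_integral_of_dominated_convergence _ ?_ hbound_int ?_ ?_
      · intro n
        exact (((hχM.mul (hBsm.mono hmxF).measurable).mul
          (stronglyMeasurable_condExp.mono hmS'F).measurable).mul
          ((hgtrM n).comp hYtM)).aestronglyMeasurable
      · intro n
        filter_upwards [hρ'01] with ω hb
        rw [Real.norm_eq_abs]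
        have h2 : |(P[R|m3 X T St]) ω| ≤ 1 := by rw [abs_of_nonneg hb.1]; exact hb.2
        have h3 : |χ ω * B ω * (P[R|m3 X T St]) ω| ≤ (ε ^ 2)⁻¹ := by
          have := abs_mul_le' (hχB_abs ω) h2; simpa using this
        exact abs_mul_le' h3 (hgtr_absle n (Yt ω))
      · exact Filter.Eventually.of_forall fun ω =>
          (hgtr_tend (Yt ω)).const_mul (χ ω * B ω * (P[R|m3 X T St]) ω)
    have hseq : (fun n : ℕ => ∫ ω, χ ω * B ω * R ω * gtr n (Yt ω) ∂P)
        = fun n : ℕ => ∫ ω, χ ω * B ω * (P[R|m3 X T St]) ω * gtr n (Yt ω) ∂P :=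
      funext hEn
    rw [hseq] at ht1
    exact tendsto_nhds_unique ht1 ht2
  -- σ-algebra identifications
  have hmXdef : mX X = MeasurableSpace.comap X inferInstance := rfl
  have h2TX : m2 T X
      = MeasurableSpace.comap T inferInstance ⊔ MeasurableSpace.comap X inferInstance :=
    comap_pair T X
  have h3S : m3 X T St = MeasurableSpace.comap X inferInstance
      ⊔ (MeasurableSpace.comap T inferInstance ⊔ MeasurableSpace.comap St inferInstance) :=
    comap_triple X T St
  have heqS : m2 T X ⊔ MeasurableSpace.comap St inferInstance = m3 X T St := by
    rw [h3S, h2TX,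
      sup_comm (MeasurableSpace.comap T inferInstance) (MeasurableSpace.comap X inferInstance),
      sup_assoc]
  have heqT : mX X ⊔ MeasurableSpace.comap T inferInstance = m2 T X := by
    rw [hmXdef, h2TX, sup_comm]
  -- Step 2 : Assumption 3 gives ρ' = ρ₂ := P[R|σ(T,X)] a.e.
  have hρeq : P[R|m3 X T St] =ᵐ[P] P[R|m2 T X] := by
    have hf01 : ∀ ω, (fun x : ℝ => min 1 (max 0 x)) (R ω) = R ω := by
      intro ω; rcases hR01 ω with h | h <;> rw [h] <;> norm_num
    have hind : ∀ C : Set 𝒮, MeasurableSet C →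
        (P[fun ω => R ω * C.indicator (fun _ => (1:ℝ)) (St ω)|m2 T X])
          =ᵐ[P] fun ω => (P[R|m2 T X]) ω
            * (P[fun ω' => C.indicator (fun _ => (1:ℝ)) (St ω')|m2 T X]) ω := by
      intro C hC
      have h := h3 t ht (fun x : ℝ => min 1 (max 0 x))
        (measurable_const.min (measurable_const.max measurable_id))
        ⟨1, fun x => by
          rw [abs_le]
          constructor
          · exact le_trans (by norm_num) (le_min zero_le_one (le_max_left 0 x))
          · exact min_le_left _ _⟩
        (fun s => C.indicator (fun _ => (1:ℝ)) s) (measurable_const.indicator hC)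
        ⟨1, fun s => by by_cases hs : s ∈ C <;> simp [Set.indicator_apply, hs]⟩
      rw [← hStdef] at h
      refine EventuallyEq.trans ?_ (h.trans ?_)
      · exact condExp_congr_ae (Filter.Eventually.of_forall fun ω => by simp only [hf01])
      · have hcc : P[fun ω' => (fun x : ℝ => min 1 (max 0 x)) (R ω')|m2 T X]
            =ᵐ[P] P[R|m2 T X] :=
          condExp_congr_ae (Filter.Eventually.of_forall fun ω => hf01 ω)
        filter_upwards [hcc] with ω hω
        rw [hω]
    have h' := condexp_sup_comap_of_indep (m₁ := m2 T X) hmTXF hStM hRint hind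
    rw [heqS] at h'
    exact h'
  have hρ₂01 : ∀ᵐ ω ∂P, 0 ≤ (P[R|m2 T X]) ω ∧ (P[R|m2 T X]) ω ≤ 1 :=
    condexp_mem_Icc hmTXF hRint hR01'
  -- Step 3 : tower property over σ(T,X)
  have step3 : ∫ ω, χ ω * B ω * (P[R|m2 T X]) ω * Yt ω ∂P
      = ∫ ω, χ ω * B ω * (P[R|m2 T X]) ω * (P[Yt|m2 T X]) ω ∂P := by
    have husm : StronglyMeasurable[m2 T X] (fun ω => χ ω * B ω * (P[R|m2 T X]) ω) :=
      (((hχm _ hTmTX).stronglyMeasurable).mul (hBsm.mono hmx_le_mTX)).mul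
        stronglyMeasurable_condExp
    have huae : ∀ᵐ ω ∂P, ‖χ ω * B ω * (P[R|m2 T X]) ω‖ ≤ (ε ^ 2)⁻¹ := by
      filter_upwards [hρ₂01] with ω h
      rw [Real.norm_eq_abs]
      have h2 : |(P[R|m2 T X]) ω| ≤ 1 := by rw [abs_of_nonneg h.1]; exact h.2
      have := abs_mul_le' (hχB_abs ω) h2; simpa using this
    have hint : Integrable (fun ω => (χ ω * B ω * (P[R|m2 T X]) ω) * Yt ω) P :=
      hYtint.bdd_mul ((husm.mono hmTXF).aestronglyMeasurable) huae
    exact (integral_mul_condexp hmTXF husm hYtint hint).symm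
  -- Step 4 : Assumption 1(i) gives P[Yt|σ(T,X)] = P[Yt|σ(X)] a.e.
  have step4 : P[Yt|m2 T X] =ᵐ[P] P[Yt|mX X] := by
    have hn : ∀ n : ℕ, P[fun ω => gtr n (Yt ω)|m2 T X] =ᵐ[P] P[fun ω => gtr n (Yt ω)|mX X] := by
      intro n
      have hind : ∀ C : Set ℝ, MeasurableSet C →
          (P[fun ω => gtr n (Yt ω) * C.indicator (fun _ => (1:ℝ)) (T ω)|mX X])
            =ᵐ[P] fun ω => (P[fun ω' => gtr n (Yt ω')|mX X]) ω
              * (P[fun ω' => C.indicator (fun _ => (1:ℝ)) (T ω')|mX X]) ω := by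
        intro C hC
        have h := h1i t ht (fun p : ℝ × 𝒮 => gtr n p.1) ((hgtrM n).comp measurable_fst)
          ⟨(n : ℝ), fun p => hgtr_bd n p.1⟩ (fun x => C.indicator (fun _ => (1:ℝ)) x)
          (measurable_const.indicator hC)
          ⟨1, fun x => by by_cases hx : x ∈ C <;> simp [Set.indicator_apply, hx]⟩
        refine EventuallyEq.trans ?_ (h.trans ?_)
        · refine condExp_congr_ae (Filter.Eventually.of_forall fun ω => ?_)
          dsimp only
        · have hcc : P[fun ω' => (fun p : ℝ × 𝒮 => gtr n p.1)
              (pot Y0 Y1 t ω', pot S0 S1 t ω')|mX X]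
              =ᵐ[P] P[fun ω' => gtr n (Yt ω')|mX X] :=
            condExp_congr_ae (Filter.Eventually.of_forall fun ω => by dsimp only)
          filter_upwards [hcc] with ω hω
          rw [hω]
      have h' := condexp_sup_comap_of_indep (m₁ := mX X) hmxF hT (hgtrYint n) hind
      rw [heqT] at h'
      exact h'
    have hdint : Integrable (fun ω => (P[Yt|m2 T X]) ω - (P[Yt|mX X]) ω) P :=
      integrable_condExp.sub integrable_condExp
    have hkey : ∀ n : ℕ, ∫ ω, |(P[Yt|m2 T X]) ω - (P[Yt|mX X]) ω| ∂P
        ≤ 2 * ∫ ω, |Yt ω - gtr n (Yt ω)| ∂P := by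
      intro n
      have hsub1 : P[fun ω => Yt ω - gtr n (Yt ω)|m2 T X]
          =ᵐ[P] fun ω => (P[Yt|m2 T X]) ω - (P[fun ω' => gtr n (Yt ω')|m2 T X]) ω :=
        condExp_sub hYtint (hgtrYint n) (m2 T X)
      have hsub2 : P[fun ω => Yt ω - gtr n (Yt ω)|mX X]
          =ᵐ[P] fun ω => (P[Yt|mX X]) ω - (P[fun ω' => gtr n (Yt ω')|mX X]) ω :=
        condExp_sub hYtint (hgtrYint n) (mX X)
      have hptw : ∀ᵐ ω ∂P, |(P[Yt|m2 T X]) ω - (P[Yt|mX X]) ω|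
          ≤ |(P[fun ω' => Yt ω' - gtr n (Yt ω')|m2 T X]) ω|
            + |(P[fun ω' => Yt ω' - gtr n (Yt ω')|mX X]) ω| := by
        filter_upwards [hsub1, hsub2, hn n] with ω h1 h2 h3
        have hsplit : (P[Yt|m2 T X]) ω - (P[Yt|mX X]) ω
            = (P[fun ω' => Yt ω' - gtr n (Yt ω')|m2 T X]) ω
              - (P[fun ω' => Yt ω' - gtr n (Yt ω')|mX X]) ω := by
          rw [h1, h2, h3]; ring
        rw [hsplit]
        exact abs_sub _ _
      have hint1 : Integrable (fun ω => |(P[fun ω' => Yt ω' - gtr n (Yt ω')|m2 T X]) ω|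
          + |(P[fun ω' => Yt ω' - gtr n (Yt ω')|mX X]) ω|) P :=
        integrable_condExp.abs.add integrable_condExp.abs
      calc ∫ ω, |(P[Yt|m2 T X]) ω - (P[Yt|mX X]) ω| ∂P
          ≤ ∫ ω, (|(P[fun ω' => Yt ω' - gtr n (Yt ω')|m2 T X]) ω|
              + |(P[fun ω' => Yt ω' - gtr n (Yt ω')|mX X]) ω|) ∂P :=
            integral_mono_ae hdint.abs hint1 hptw
        _ = ∫ ω, |(P[fun ω' => Yt ω' - gtr n (Yt ω')|m2 T X]) ω| ∂P
              + ∫ ω, |(P[fun ω' => Yt ω' - gtr n (Yt ω')|mX X]) ω| ∂P :=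
            integral_add integrable_condExp.abs integrable_condExp.abs
        _ ≤ ∫ ω, |Yt ω - gtr n (Yt ω)| ∂P + ∫ ω, |Yt ω - gtr n (Yt ω)| ∂P :=
            add_le_add (integral_abs_condExp_le _) (integral_abs_condExp_le _)
        _ = 2 * ∫ ω, |Yt ω - gtr n (Yt ω)| ∂P := by ring
    have hto0 : Filter.Tendsto (fun n : ℕ => 2 * ∫ ω, |Yt ω - gtr n (Yt ω)| ∂P)
        Filter.atTop (nhds 0) := by
      have htd : Filter.Tendsto (fun n : ℕ => ∫ ω, |Yt ω - gtr n (Yt ω)| ∂P)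
          Filter.atTop (nhds (∫ ω, |Yt ω - Yt ω| ∂P)) := by
        refine tendsto_integral_of_dominated_convergence (fun ω => 2 * |Yt ω|) ?_
          (hYtint.abs.const_mul 2) ?_ ?_
        · intro n
          exact (hYtM.sub ((hgtrM n).comp hYtM)).abs.aestronglyMeasurable
        · intro n
          refine Filter.Eventually.of_forall fun ω => ?_
          rw [Real.norm_eq_abs, abs_abs]
          calc |Yt ω - gtr n (Yt ω)| ≤ |Yt ω| + |gtr n (Yt ω)| := abs_sub _ _
            _ ≤ |Yt ω| + |Yt ω| := add_le_add le_rfl (hgtr_absle n _)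
            _ = 2 * |Yt ω| := by ring
        · refine Filter.Eventually.of_forall fun ω => ?_
          exact ((tendsto_const_nhds.sub (hgtr_tend (Yt ω))).abs)
      have hz : ∫ ω, |Yt ω - Yt ω| ∂P = 0 := by simp
      rw [hz] at htd
      have := htd.const_mul (2:ℝ)
      simpa using this
    have hge : ∫ ω, |(P[Yt|m2 T X]) ω - (P[Yt|mX X]) ω| ∂P ≤ 0 :=
      ge_of_tendsto hto0 (Filter.Eventually.of_forall hkey)
    have h0 : ∫ ω, |(P[Yt|m2 T X]) ω - (P[Yt|mX X]) ω| ∂P = 0 :=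
      le_antisymm hge (integral_nonneg fun ω => abs_nonneg _)
    have hae0 := (integral_eq_zero_iff_of_nonneg (fun ω => abs_nonneg _) hdint.abs).mp h0
    filter_upwards [hae0] with ω hω
    have : (P[Yt|m2 T X]) ω - (P[Yt|mX X]) ω = 0 := abs_eq_zero.mp hω
    linarith
  -- Step 5 : collapse everything over σ(X)
  have hχρ₂_pull : (fun ω => χ ω * (P[R|m2 T X]) ω) =ᵐ[P] P[fun ω => χ ω * R ω|m2 T X] :=
    (condExp_mul_of_stronglyMeasurable_left ((hχm _ hTmTX).stronglyMeasurable)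
      (by exact hχRint) hRint).symm
  have hq2 : P[fun ω => χ ω * (P[R|m2 T X]) ω|mX X] =ᵐ[P] q := by
    refine (condExp_congr_ae hχρ₂_pull).trans ?_
    exact condExp_condExp_of_le hmx_le_mTX hmTXF
  have hχρ₂int : Integrable (fun ω => χ ω * (P[R|m2 T X]) ω) P :=
    Integrable.congr integrable_condExp hχρ₂_pull.symm
  have step5 : ∫ ω, χ ω * B ω * (P[R|m2 T X]) ω * (P[Yt|mX X]) ω ∂P = ∫ ω, Yt ω ∂P := by
    have hu5sm : StronglyMeasurable[mX X] (fun ω => B ω * (P[Yt|mX X]) ω) :=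
      hBsm.mul stronglyMeasurable_condExp
    have hu5Z5int : Integrable (fun ω => (B ω * (P[Yt|mX X]) ω) * (χ ω * (P[R|m2 T X]) ω)) P := by
      refine Integrable.mono'
        ((integrable_condExp (m := mX X) (f := Yt)).abs.const_mul ((ε ^ 2)⁻¹)) ?_ ?_
      · exact ((hBsm.mono hmxF).aestronglyMeasurable.mul
          (stronglyMeasurable_condExp.mono hmxF).aestronglyMeasurable).mul
          ((hχM.mul (stronglyMeasurable_condExp.mono hmTXF).measurable).aestronglyMeasurable)
      · filter_upwards [hρ₂01] with ω h
        rw [Real.norm_eq_abs]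
        have h1 : |χ ω * (P[R|m2 T X]) ω| ≤ 1 := by
          have h2 : |(P[R|m2 T X]) ω| ≤ 1 := by rw [abs_of_nonneg h.1]; exact h.2
          have := abs_mul_le' (hχ_abs ω) h2; simpa using this
        have h3 : |B ω * (P[Yt|mX X]) ω| ≤ (ε ^ 2)⁻¹ * |(P[Yt|mX X]) ω| := by
          rw [abs_mul]
          exact mul_le_mul_of_nonneg_right (hB_abs ω) (abs_nonneg _)
        calc |B ω * (P[Yt|mX X]) ω * (χ ω * (P[R|m2 T X]) ω)|
            ≤ ((ε ^ 2)⁻¹ * |(P[Yt|mX X]) ω|) * 1 := abs_mul_le' h3 h1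
          _ = (ε ^ 2)⁻¹ * |(P[Yt|mX X]) ω| := mul_one _
    have e5 : ∫ ω, (B ω * (P[Yt|mX X]) ω) * (P[fun ω' => χ ω' * (P[R|m2 T X]) ω'|mX X]) ω ∂P
        = ∫ ω, (B ω * (P[Yt|mX X]) ω) * (χ ω * (P[R|m2 T X]) ω) ∂P :=
      integral_mul_condexp hmxF hu5sm hχρ₂int hu5Z5int
    calc ∫ ω, χ ω * B ω * (P[R|m2 T X]) ω * (P[Yt|mX X]) ω ∂P
        = ∫ ω, (B ω * (P[Yt|mX X]) ω) * (χ ω * (P[R|m2 T X]) ω) ∂P :=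
          integral_congr_ae (Filter.Eventually.of_forall fun ω => by
            show χ ω * B ω * (P[R|m2 T X]) ω * (P[Yt|mX X]) ω
              = (B ω * (P[Yt|mX X]) ω) * (χ ω * (P[R|m2 T X]) ω)
            ring)
      _ = ∫ ω, (B ω * (P[Yt|mX X]) ω) * (P[fun ω' => χ ω' * (P[R|m2 T X]) ω'|mX X]) ω ∂P :=
          e5.symm
      _ = ∫ ω, (B ω * (P[Yt|mX X]) ω) * q ω ∂P := by
          refine integral_congr_ae ?_
          filter_upwards [hq2] with ω h
          rw [h]
      _ = ∫ ω, (P[Yt|mX X]) ω * (B ω * qc ω) ∂P := by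
          refine integral_congr_ae ?_
          filter_upwards [hqc_eq] with ω h
          rw [← h]; ring
      _ = ∫ ω, (P[Yt|mX X]) ω ∂P := by
          refine integral_congr_ae (Filter.Eventually.of_forall fun ω => ?_)
          show (P[Yt|mX X]) ω * (B ω * qc ω) = (P[Yt|mX X]) ω
          rw [hBqc ω, mul_one]
      _ = ∫ ω, Yt ω ∂P := integral_condExp hmxF
  -- The key identity (G)
  have stepG : ∫ ω, χ ω * R ω * B ω * Yt ω ∂P = ∫ ω, Yt ω ∂P := by
    calc ∫ ω, χ ω * R ω * B ω * Yt ω ∂P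
        = ∫ ω, χ ω * B ω * R ω * Yt ω ∂P :=
          integral_congr_ae (Filter.Eventually.of_forall fun ω => by
            show χ ω * R ω * B ω * Yt ω = χ ω * B ω * R ω * Yt ω
            ring)
      _ = ∫ ω, χ ω * B ω * (P[R|m3 X T St]) ω * Yt ω ∂P := step1
      _ = ∫ ω, χ ω * B ω * (P[R|m2 T X]) ω * Yt ω ∂P := by
          refine integral_congr_ae ?_
          filter_upwards [hρeq] with ω h
          rw [h]
      _ = ∫ ω, χ ω * B ω * (P[R|m2 T X]) ω * (P[Yt|m2 T X]) ω ∂P := step3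
      _ = ∫ ω, χ ω * B ω * (P[R|m2 T X]) ω * (P[Yt|mX X]) ω ∂P := by
          refine integral_congr_ae ?_
          filter_upwards [step4] with ω h
          rw [h]
      _ = ∫ ω, Yt ω ∂P := step5
  -- bridge from Yobs to Yt
  have hbrY : ∫ ω, χ ω * R ω * B ω * Yobs ω ∂P = ∫ ω, χ ω * R ω * B ω * Yt ω ∂P := by
    refine integral_congr_ae (Filter.Eventually.of_forall fun ω => ?_)
    show χ ω * R ω * B ω * Yobs ω = χ ω * R ω * B ω * Yt ω
    by_cases hc : T ω = t
    · rw [hobsY ω hc]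
    · rw [hχ0 ω hc]; ring
  constructor
  · -- part (a)
    intro h hh hhspec
    have hHsm : StronglyMeasurable[mX X] (fun ω => h (X ω)) :=
      (hh.comp (measurable_comap' X)).stronglyMeasurable
    set N : Ω → ℝ := fun ω => ν (T ω) (X ω) (Sobs ω) with hNdef
    have hNm : Measurable N := by
      rw [hNdef]
      exact hν.comp (hT.prodMk (hX.prodMk hSobsM))
    have hNspec : ∀ᵐ ω ∂P, R ω = 1 → N ω = (P[Yobs|m4 T X Sobs R]) ω := by
      filter_upwards [hνSpec] with ω hω h1
      exact hω h1
    have hNR : (fun ω => N ω * R ω) =ᵐ[P] fun ω => (P[Yobs|m4 T X Sobs R]) ω * R ω := by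
      filter_upwards [hNspec] with ω hω
      rcases hR01 ω with h0 | h1
      · rw [h0, mul_zero, mul_zero]
      · rw [h1, mul_one, mul_one]
        exact hω h1
    have hRVint : Integrable (fun ω => R ω * (P[Yobs|m4 T X Sobs R]) ω) P :=
      integrable_condExp.bdd_mul hR.aestronglyMeasurable
        (Filter.Eventually.of_forall fun ω => by rw [Real.norm_eq_abs]; exact hR_abs ω)
    have hVRint : Integrable (fun ω => (P[Yobs|m4 T X Sobs R]) ω * R ω) P :=
      Integrable.congr hRVint (Filter.Eventually.of_forall fun ω => mul_comm _ _)
    have hNRint : Integrable (fun ω => N ω * R ω) P := Integrable.congr hVRint hNR.symm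
    have hNsm : StronglyMeasurable[m3 T X Sobs] N := by
      rw [hNdef]
      exact (hν.comp (measurable_comap' _)).stronglyMeasurable
    have hpull : P[fun ω => N ω * R ω|m3 T X Sobs] =ᵐ[P] fun ω => N ω * ρS ω :=
      condExp_mul_of_stronglyMeasurable_left hNsm (by exact hNRint) hRint
    have hNρSint : Integrable (fun ω => N ω * ρS ω) P :=
      Integrable.congr integrable_condExp hpull
    have hNint : Integrable N P := by
      refine Integrable.mono' (hNρSint.abs.const_mul ε⁻¹) hNm.aestronglyMeasurable ?_
      filter_upwards [hρSge] with ω hω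
      rw [Real.norm_eq_abs]
      have hρpos : 0 < ρS ω := lt_of_lt_of_le hε0 hω
      rw [abs_mul, abs_of_pos hρpos]
      calc |N ω| = ε⁻¹ * (ε * |N ω|) := by
            rw [← mul_assoc, inv_mul_cancel₀ hε0.ne', one_mul]
        _ ≤ ε⁻¹ * (|N ω| * ρS ω) := by
            refine mul_le_mul_of_nonneg_left ?_ (inv_pos.mpr hε0).le
            calc ε * |N ω| ≤ ρS ω * |N ω| := mul_le_mul_of_nonneg_right hω (abs_nonneg _)
              _ = |N ω| * ρS ω := mul_comm _ _
    have hcore := coreC N hNint (fun ω => h (X ω)) hHsm hhspec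
    -- bridge from N to Yobs via the conditional expectation given (T,X,S,R)
    have hbr1 : ∫ ω, χ ω * R ω * B ω * N ω ∂P
        = ∫ ω, (χ ω * R ω * B ω) * (P[Yobs|m4 T X Sobs R]) ω ∂P := by
      refine integral_congr_ae ?_
      filter_upwards [hNspec] with ω hω
      show χ ω * R ω * B ω * N ω = (χ ω * R ω * B ω) * (P[Yobs|m4 T X Sobs R]) ω
      rcases hR01 ω with h0 | h1
      · rw [h0]; ring
      · rw [hω h1]
    have hχRBsm4 : StronglyMeasurable[m4 T X Sobs R] (fun ω => χ ω * R ω * B ω) :=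
      (((hχm _ hTm4).mul hRm4).stronglyMeasurable).mul (hBsm.mono hmx_le_m4)
    have hbr2int : Integrable (fun ω => (χ ω * R ω * B ω) * Yobs ω) P :=
      hYobsInt.bdd_mul ((hχRBsm4.mono hm4F).aestronglyMeasurable)
        (Filter.Eventually.of_forall fun ω => by rw [Real.norm_eq_abs]; exact hCabs ω)
    have hbr2 : ∫ ω, (χ ω * R ω * B ω) * (P[Yobs|m4 T X Sobs R]) ω ∂P
        = ∫ ω, (χ ω * R ω * B ω) * Yobs ω ∂P :=
      integral_mul_condexp hm4F hχRBsm4 hYobsInt hbr2int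
    calc ∫ ω, Yt ω ∂P
        = ∫ ω, χ ω * R ω * B ω * Yt ω ∂P := stepG.symm
      _ = ∫ ω, χ ω * R ω * B ω * Yobs ω ∂P := hbrY.symm
      _ = ∫ ω, (χ ω * R ω * B ω) * (P[Yobs|m4 T X Sobs R]) ω ∂P := hbr2.symm
      _ = ∫ ω, χ ω * R ω * B ω * N ω ∂P := hbr1.symm
      _ = ∫ ω, h (X ω) ∂P := hcore.symm
  · -- part (b)
    intro m hm hmspec
    have hHsm : StronglyMeasurable[mX X] (fun ω => m (X ω)) :=
      (hm.comp (measurable_comap' X)).stronglyMeasurable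
    have hcore := coreC Yobs hYobsInt (fun ω => m (X ω)) hHsm hmspec
    calc ∫ ω, Yt ω ∂P
        = ∫ ω, χ ω * R ω * B ω * Yt ω ∂P := stepG.symm
      _ = ∫ ω, χ ω * R ω * B ω * Yobs ω ∂P := hbrY.symm
      _ = ∫ ω, m (X ω) ∂P := hcore.symm
end
end

section
/- Closed form of the efficiency lower bound with fully observed outcomes (Corollary, Setting IV). Under Assumption 1(i), ε ≤ e*(X) ≤ 1−ε a.s. for some ε ∈ (0,1/2), and Y(0), Y(1) ∈ L²(P): E[ψ_IV²] = Var[ (T/e*(X) − (1−T)/(1−e*(X)))·Y ] − E[ ( √((1−e*(X))/e*(X))·μ*(1,X) + √(e*(X)/(1−e*(X)))·μ*(0,X) )² ], where Var[Z] := E[Z²] − (E[Z])². -/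
open MeasureTheory ProbabilityTheory Filter
open scoped ENNReal NNReal Topology

noncomputable section

open Surrogate

namespace SAux
open MeasureTheory Filter
open scoped Topology
variable {Ω : Type*} {m0 : MeasurableSpace Ω} {P : Measure Ω}

lemma integrable_mul_L2 {f g : Ω → ℝ} (hf : MemLp f 2 P) (hg : MemLp g 2 P) :
    Integrable (fun ω => f ω * g ω) P := by
  refine Integrable.mono' ((hf.integrable_sq.add hg.integrable_sq).div_const 2)
    (hf.1.mul hg.1) (Filter.Eventually.of_forall fun ω => ?_)
  have h := sq_nonneg (|f ω| - |g ω|)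
  simp only [Pi.add_apply, Real.norm_eq_abs, abs_mul]
  nlinarith [abs_nonneg (f ω), abs_nonneg (g ω), sq_abs (f ω), sq_abs (g ω)]

lemma integrable_bdd_mul {c : ℝ} {b h : Ω → ℝ} (hb : AEStronglyMeasurable b P)
    (hbd : ∀ᵐ ω ∂P, |b ω| ≤ c) (hh : Integrable h P) :
    Integrable (fun ω => b ω * h ω) P := by
  refine Integrable.mono' (hh.norm.const_mul c) (hb.mul hh.1) ?_
  filter_upwards [hbd] with ω hω
  rw [Real.norm_eq_abs, abs_mul]
  exact mul_le_mul_of_nonneg_right hω (abs_nonneg _)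

lemma memℒp_bdd_mul {c : ℝ} {b h : Ω → ℝ} (hb : AEStronglyMeasurable b P)
    (hbd : ∀ᵐ ω ∂P, |b ω| ≤ c) (hh : MemLp h 2 P) :
    MemLp (fun ω => b ω * h ω) 2 P := by
  refine MemLp.of_le_mul (c := c) hh (hb.mul hh.1) ?_
  filter_upwards [hbd] with ω hω
  rw [Real.norm_eq_abs, Real.norm_eq_abs, abs_mul]
  exact mul_le_mul_of_nonneg_right hω (abs_nonneg _)

lemma memℒp_two_condexp' {Ω : Type*} {m m0 : MeasurableSpace Ω} {P : Measure Ω}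
    [IsFiniteMeasure P] (hm : m ≤ m0)
    {Y : Ω → ℝ} (hY : MemLp Y 2 P) : MemLp (P[Y|m]) 2 P := by
  haveI : SigmaFinite (P.trim hm) := by infer_instance
  set f0 : Lp ℝ 2 P := hY.toLp Y with hf0
  set g : Lp ℝ 2 P := (condExpL2 ℝ ℝ hm f0 : Lp ℝ 2 P) with hgdef
  have hg2 : MemLp (g : Ω → ℝ) 2 P := Lp.memLp _
  have hae : (g : Ω → ℝ) =ᵐ[P] P[Y|m] := by
    refine ae_eq_condExp_of_forall_setIntegral_eq hm (hY.integrable one_le_two) ?_ ?_ ?_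
    · intro s _ _; exact (hg2.integrable one_le_two).integrableOn
    · intro s hs hμs
      have hint := integral_condExpL2_eq (E' := ℝ) (𝕜 := ℝ) hm f0 hs hμs.ne
      rw [hgdef]; rw [hint]
      exact setIntegral_congr_ae (hm s hs) ((MemLp.coeFn_toLp hY).mono fun x hx _ => hx)
    · exact aestronglyMeasurable_condExpL2 hm _
  exact hg2.ae_eq hae

lemma integral_mul_condexp [IsFiniteMeasure P] {m : MeasurableSpace Ω} (hm : m ≤ m0)
    {G u : Ω → ℝ} (hG : StronglyMeasurable[m] G) (hu : Integrable u P)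
    (hGu : Integrable (fun ω => G ω * u ω) P) :
    ∫ ω, G ω * u ω ∂P = ∫ ω, G ω * (P[u|m]) ω ∂P := by
  haveI : SigmaFinite (P.trim hm) := by infer_instance
  have h1 : ∫ ω, G ω * u ω ∂P = ∫ ω, (P[fun ω => G ω * u ω|m]) ω ∂P :=
    (integral_condExp hm).symm
  rw [h1]
  refine integral_congr_ae ?_
  have := condExp_mul_of_stronglyMeasurable_left (μ := P) hG (f := G) (g := u) ?_ hu
  · exact this.mono fun ω hω => hω
  · exact hGu

lemma abs_div_le_one {a x ε : ℝ} (ha : |a| ≤ 1) (hx : ε ≤ x) (hε : 0 < ε) : |a / x| ≤ 1 / ε := by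
  rw [abs_div]
  exact div_le_div₀ zero_le_one ha hε (by rwa [abs_of_pos (lt_of_lt_of_le hε hx)])

lemma abs_div_sq_le_one {a x ε : ℝ} (ha : |a| ≤ 1) (hx : ε ≤ x) (hε : 0 < ε) :
    |a / x ^ 2| ≤ 1 / ε ^ 2 := by
  rw [abs_div]
  have hx0 : 0 < x := lt_of_lt_of_le hε hx
  refine div_le_div₀ zero_le_one ha (by positivity) ?_
  rw [abs_of_pos (by positivity : (0:ℝ) < x ^ 2)]
  exact pow_le_pow_left₀ hε.le hx 2


lemma memℒp_of_bdd [IsFiniteMeasure P] {b : Ω → ℝ} {c : ℝ} (hb : AEStronglyMeasurable b P)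
    (hbd : ∀ᵐ ω ∂P, |b ω| ≤ c) : MemLp b 2 P := by
  refine MemLp.of_le_mul (c := c) (memLp_const (1:ℝ)) hb ?_
  filter_upwards [hbd] with ω h
  simpa using h

-- truncation
def tc (n : ℕ) (y : ℝ) : ℝ := max (-(n : ℝ)) (min y n)

lemma tc_meas (n : ℕ) : Measurable (tc n) :=
  measurable_const.max (measurable_id.min measurable_const)

lemma tc_abs_le_n (n : ℕ) (y : ℝ) : |tc n y| ≤ n := by
  rw [abs_le]
  constructor
  · exact le_max_left _ _
  · exact max_le (by simp) (min_le_right _ _)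

lemma tc_abs_le (n : ℕ) (y : ℝ) : |tc n y| ≤ |y| := by
  rw [abs_le]
  constructor
  · refine le_max_of_le_right ?_
    rcases le_total y (n : ℝ) with h | h
    · rw [min_eq_left h]; exact neg_abs_le y
    · rw [min_eq_right h]; have : (0:ℝ) ≤ n := by positivity
      linarith [abs_nonneg y]
  · refine max_le (by linarith [abs_nonneg y, (by positivity : (0:ℝ) ≤ (n:ℝ))]) ?_
    exact le_trans (min_le_left _ _) (le_abs_self y)

lemma tc_tendsto (y : ℝ) : Tendsto (fun n : ℕ => tc n y) atTop (𝓝 y) := by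
  have h : ∀ n : ℕ, n ≥ ⌈|y|⌉₊ → tc n y = y := by
    intro n hn
    have hy : |y| ≤ (n : ℝ) := le_trans (Nat.le_ceil _) (by exact_mod_cast hn)
    have h1 : y ≤ (n : ℝ) := le_trans (le_abs_self y) hy
    have h2 : -(n : ℝ) ≤ y := by linarith [neg_abs_le y]
    rw [tc, min_eq_left h1, max_eq_right h2]
  exact tendsto_atTop_of_eventually_const h

end SAux

set_option maxHeartbeats 1000000 in
/-- Closed form of the efficiency lower bound with fully observed outcomes
(Corollary, Setting IV). -/
theorem statement10
    {Ω 𝒳 𝒮 : Type*} [MeasurableSpace Ω] [MeasurableSpace 𝒳] [MeasurableSpace 𝒮]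
    [StandardBorelSpace 𝒳] [StandardBorelSpace 𝒮]
    (P : Measure Ω) [IsProbabilityMeasure P]
    (X : Ω → 𝒳) (T : Ω → ℝ) (S0 S1 : Ω → 𝒮) (Y0 Y1 : Ω → ℝ)
    (hX : Measurable X) (hT : Measurable T)
    (hS0 : Measurable S0) (hS1 : Measurable S1)
    (hY0 : Measurable Y0) (hY1 : Measurable Y1)
    (hT01 : ∀ ω, T ω = 0 ∨ T ω = 1)
    -- the treatment propensity e* (note that E[T|σ(X)] = P(T=1|σ(X)))
    (e : 𝒳 → ℝ) (he : Measurable e) (heRange : ∀ x, e x ∈ Set.Icc (0 : ℝ) 1)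
    (heSpec : (fun ω => e (X ω)) =ᵐ[P] P[T|mX X])
    -- Assumption 1(i)
    (h1i : ∀ t : ℝ, t = 0 ∨ t = 1 →
      CondIndepBdd P (mX X) (fun ω => (pot Y0 Y1 t ω, pot S0 S1 t ω)) T)
    -- strict overlap for e*
    (ε : ℝ) (hε0 : 0 < ε) (hε : ε < 1 / 2)
    (h2e : ∀ᵐ ω ∂P, ε ≤ e (X ω) ∧ e (X ω) ≤ 1 - ε)
    -- the outcome regression μ*
    (mu : ℝ → 𝒳 → ℝ) (hmu : Measurable fun p : ℝ × 𝒳 => mu p.1 p.2)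
    (hmuSpec : ∀ t : ℝ, t = 0 ∨ t = 1 →
      (fun ω => mu t (X ω)) =ᵐ[P] P[pot Y0 Y1 t|mX X])
    -- Y(0), Y(1) ∈ L²(P)
    (hY0L2 : MemLp Y0 2 P) (hY1L2 : MemLp Y1 2 P) :
    ∫ ω, (psiIV X T (obs T Y0 Y1) e mu ((∫ ω', Y1 ω' ∂P) - ∫ ω', Y0 ω' ∂P) ω) ^ 2 ∂P
      = Var P (fun ω =>
            (T ω / e (X ω) - (1 - T ω) / (1 - e (X ω))) * obs T Y0 Y1 ω)
        - ∫ ω, (Real.sqrt ((1 - e (X ω)) / e (X ω)) * mu 1 (X ω)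
              + Real.sqrt (e (X ω) / (1 - e (X ω))) * mu 0 (X ω)) ^ 2 ∂P := by
  classical
  have hm : mX X ≤ ‹MeasurableSpace Ω› := hX.comap_le
  haveI hSF : SigmaFinite (P.trim hm) := by infer_instance
  have hXm : Measurable[mX X] X := Measurable.of_comap_le le_rfl
  have hmu1 : Measurable (mu 1) := hmu.comp (measurable_const.prodMk measurable_id)
  have hmu0 : Measurable (mu 0) := hmu.comp (measurable_const.prodMk measurable_id)
  have hEm : Measurable fun ω => e (X ω) := he.comp hX
  have hM1m : Measurable fun ω => mu 1 (X ω) := hmu1.comp hX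
  have hM0m : Measurable fun ω => mu 0 (X ω) := hmu0.comp hX
  have hEsm : StronglyMeasurable[mX X] fun ω => e (X ω) := (he.comp hXm).stronglyMeasurable
  have hM1sm : StronglyMeasurable[mX X] fun ω => mu 1 (X ω) := (hmu1.comp hXm).stronglyMeasurable
  have hM0sm : StronglyMeasurable[mX X] fun ω => mu 0 (X ω) := (hmu0.comp hXm).stronglyMeasurable
  have hpot1 : pot Y0 Y1 (1:ℝ) = Y1 := by simp [pot]
  have hpot0 : pot Y0 Y1 (0:ℝ) = Y0 := by norm_num [pot]
  have hmuS1 : (fun ω => mu 1 (X ω)) =ᵐ[P] P[Y1|mX X] := by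
    have h := hmuSpec 1 (Or.inr rfl); rwa [hpot1] at h
  have hmuS0 : (fun ω => mu 0 (X ω)) =ᵐ[P] P[Y0|mX X] := by
    have h := hmuSpec 0 (Or.inl rfl); rwa [hpot0] at h
  have hM1L2 : MemLp (fun ω => mu 1 (X ω)) 2 P :=
    (SAux.memℒp_two_condexp' hm hY1L2).ae_eq hmuS1.symm
  have hM0L2 : MemLp (fun ω => mu 0 (X ω)) 2 P :=
    (SAux.memℒp_two_condexp' hm hY0L2).ae_eq hmuS0.symm
  have hTb : ∀ ω, |T ω| ≤ 1 := fun ω => by rcases hT01 ω with h | h <;> simp [h]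
  have hT1b : ∀ ω, |1 - T ω| ≤ 1 := fun ω => by rcases hT01 ω with h | h <;> simp [h]
  have hEb : ∀ ω, |e (X ω)| ≤ 1 := fun ω =>
    abs_le.mpr ⟨by linarith [(heRange (X ω)).1], (heRange (X ω)).2⟩
  have hTint : Integrable T P := by
    refine Integrable.mono' (integrable_const 1) hT.aestronglyMeasurable
      (Filter.Eventually.of_forall fun ω => ?_)
    simpa [Real.norm_eq_abs] using hTb ω
  have h2e' : ∀ᵐ ω ∂P, ε ≤ e (X ω) ∧ ε ≤ 1 - e (X ω) :=
    h2e.mono fun ω h => ⟨h.1, by linarith [h.2]⟩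
  have hEne : ∀ᵐ ω ∂P, e (X ω) ≠ 0 ∧ (1 : ℝ) - e (X ω) ≠ 0 :=
    h2e'.mono fun ω h => ⟨by nlinarith [h.1], by nlinarith [h.2]⟩
  -- a.e. bounds for reciprocal weights
  have hbE1 : ∀ᵐ ω ∂P, |1 / e (X ω)| ≤ 1 / ε :=
    h2e'.mono fun ω h => SAux.abs_div_le_one (by norm_num) h.1 hε0
  have hbE2 : ∀ᵐ ω ∂P, |1 / e (X ω) ^ 2| ≤ 1 / ε ^ 2 :=
    h2e'.mono fun ω h => SAux.abs_div_sq_le_one (by norm_num) h.1 hε0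
  have hbF1 : ∀ᵐ ω ∂P, |1 / (1 - e (X ω))| ≤ 1 / ε :=
    h2e'.mono fun ω h => SAux.abs_div_le_one (by norm_num) h.2 hε0
  have hbF2 : ∀ᵐ ω ∂P, |1 / (1 - e (X ω)) ^ 2| ≤ 1 / ε ^ 2 :=
    h2e'.mono fun ω h => SAux.abs_div_sq_le_one (by norm_num) h.2 hε0
  have hbT1 : ∀ᵐ ω ∂P, |T ω / e (X ω)| ≤ 1 / ε :=
    h2e'.mono fun ω h => SAux.abs_div_le_one (hTb ω) h.1 hε0
  have hbT2 : ∀ᵐ ω ∂P, |T ω / e (X ω) ^ 2| ≤ 1 / ε ^ 2 :=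
    h2e'.mono fun ω h => SAux.abs_div_sq_le_one (hTb ω) h.1 hε0
  have hbU1 : ∀ᵐ ω ∂P, |(1 - T ω) / (1 - e (X ω))| ≤ 1 / ε :=
    h2e'.mono fun ω h => SAux.abs_div_le_one (hT1b ω) h.2 hε0
  have hbU2 : ∀ᵐ ω ∂P, |(1 - T ω) / (1 - e (X ω)) ^ 2| ≤ 1 / ε ^ 2 :=
    h2e'.mono fun ω h => SAux.abs_div_sq_le_one (hT1b ω) h.2 hε0
  -- ===== the key conditional-independence integral identity =====
  have key : ∀ t : ℝ, t = 0 ∨ t = 1 → ∀ G : Ω → ℝ, StronglyMeasurable[mX X] G →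
      MemLp G 2 P →
      ∫ ω, T ω * pot Y0 Y1 t ω * G ω ∂P = ∫ ω, e (X ω) * mu t (X ω) * G ω ∂P := by
    intro t ht G hG hGL2
    have hGaesm : AEStronglyMeasurable G P := hGL2.1
    have hGL1 : Integrable G P := hGL2.integrable one_le_two
    have hYtm : Measurable (pot Y0 Y1 t) := by
      rcases ht with h | h <;> subst h
      · rw [hpot0]; exact hY0
      · rw [hpot1]; exact hY1
    have hYtL2 : MemLp (pot Y0 Y1 t) 2 P := by
      rcases ht with h | h <;> subst h
      · rw [hpot0]; exact hY0L2
      · rw [hpot1]; exact hY1L2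
    have hmuSt : (fun ω => mu t (X ω)) =ᵐ[P] P[pot Y0 Y1 t|mX X] := hmuSpec t ht
    have hgTa : ∀ ω, max 0 (min (T ω) 1) = T ω := fun ω => by
      rcases hT01 ω with h' | h' <;> rw [h'] <;> norm_num
    have hCI : ∀ n : ℕ,
        (P[fun ω => SAux.tc n (pot Y0 Y1 t ω) * T ω|mX X]) =ᵐ[P]
          fun ω => (P[fun ω' => SAux.tc n (pot Y0 Y1 t ω')|mX X]) ω * (P[T|mX X]) ω := by
      intro n
      have hgb : Bdd (fun x : ℝ => max 0 (min x 1)) :=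
        ⟨1, fun x => abs_le.mpr ⟨le_trans (by norm_num) (le_max_left _ _),
          max_le zero_le_one (min_le_right _ _)⟩⟩
      have hfb : Bdd (fun p : ℝ × 𝒮 => SAux.tc n p.1) := ⟨n, fun p => SAux.tc_abs_le_n n p.1⟩
      have h := h1i t ht (fun p : ℝ × 𝒮 => SAux.tc n p.1)
        ((SAux.tc_meas n).comp measurable_fst) hfb
        (fun x => max 0 (min x 1))
        (measurable_const.max (measurable_id.min measurable_const)) hgb
      simp only [hgTa] at h
      exact h
    have step : ∀ n : ℕ, ∫ ω, T ω * SAux.tc n (pot Y0 Y1 t ω) * G ω ∂P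
        = ∫ ω, e (X ω) * SAux.tc n (pot Y0 Y1 t ω) * G ω ∂P := by
      intro n
      have hum : Measurable fun ω => SAux.tc n (pot Y0 Y1 t ω) * T ω :=
        ((SAux.tc_meas n).comp hYtm).mul hT
      have hubd : ∀ ω, |SAux.tc n (pot Y0 Y1 t ω) * T ω| ≤ (n : ℝ) := fun ω => by
        rw [abs_mul]
        calc |SAux.tc n (pot Y0 Y1 t ω)| * |T ω| ≤ (n : ℝ) * 1 :=
              mul_le_mul (SAux.tc_abs_le_n n _) (hTb ω) (abs_nonneg _) (by positivity)
          _ = (n : ℝ) := mul_one _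
      have hui : Integrable (fun ω => SAux.tc n (pot Y0 Y1 t ω) * T ω) P :=
        Integrable.mono' (integrable_const (n : ℝ)) hum.aestronglyMeasurable
          (Filter.Eventually.of_forall fun ω => by rw [Real.norm_eq_abs]; exact hubd ω)
      have hGui : Integrable (fun ω => G ω * (SAux.tc n (pot Y0 Y1 t ω) * T ω)) P :=
        (SAux.integrable_bdd_mul hum.aestronglyMeasurable
          (Filter.Eventually.of_forall hubd) hGL1).congr
          (Filter.Eventually.of_forall fun ω => by ring)
      have htcm' : Measurable fun ω => SAux.tc n (pot Y0 Y1 t ω) := (SAux.tc_meas n).comp hYtm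
      have htci : Integrable (fun ω => SAux.tc n (pot Y0 Y1 t ω)) P :=
        Integrable.mono' (integrable_const (n : ℝ)) htcm'.aestronglyMeasurable
          (Filter.Eventually.of_forall fun ω => by
            rw [Real.norm_eq_abs]; exact SAux.tc_abs_le_n n _)
      have hGEi : Integrable (fun ω => (G ω * e (X ω)) * SAux.tc n (pot Y0 Y1 t ω)) P := by
        have h1 : Integrable (fun ω => G ω * e (X ω)) P :=
          (SAux.integrable_bdd_mul hEm.aestronglyMeasurable
            (Filter.Eventually.of_forall hEb) hGL1).congr
            (Filter.Eventually.of_forall fun ω => by ring)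
        exact (SAux.integrable_bdd_mul htcm'.aestronglyMeasurable
          (Filter.Eventually.of_forall fun ω => SAux.tc_abs_le_n n _) h1).congr
          (Filter.Eventually.of_forall fun ω => by ring)
      calc ∫ ω, T ω * SAux.tc n (pot Y0 Y1 t ω) * G ω ∂P
          = ∫ ω, G ω * (SAux.tc n (pot Y0 Y1 t ω) * T ω) ∂P :=
            integral_congr_ae (Filter.Eventually.of_forall fun ω => by ring)
        _ = ∫ ω, G ω * (P[fun ω' => SAux.tc n (pot Y0 Y1 t ω') * T ω'|mX X]) ω ∂P :=
            SAux.integral_mul_condexp hm hG hui hGui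
        _ = ∫ ω, (G ω * e (X ω)) * (P[fun ω' => SAux.tc n (pot Y0 Y1 t ω')|mX X]) ω ∂P := by
            refine integral_congr_ae ?_
            filter_upwards [hCI n, heSpec] with ω h1 h2
            rw [h1, ← h2]; ring
        _ = ∫ ω, (G ω * e (X ω)) * SAux.tc n (pot Y0 Y1 t ω) ∂P :=
            (SAux.integral_mul_condexp hm (hG.mul hEsm) htci hGEi).symm
        _ = ∫ ω, e (X ω) * SAux.tc n (pot Y0 Y1 t ω) * G ω ∂P :=
            integral_congr_ae (Filter.Eventually.of_forall fun ω => by ring)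
    have hbound : Integrable (fun ω => |pot Y0 Y1 t ω * G ω|) P :=
      (SAux.integrable_mul_L2 hYtL2 hGL2).abs
    have hdom : ∀ c : Ω → ℝ, Measurable c → (∀ ω, |c ω| ≤ 1) →
        Filter.Tendsto (fun n : ℕ => ∫ ω, c ω * SAux.tc n (pot Y0 Y1 t ω) * G ω ∂P) Filter.atTop
          (𝓝 (∫ ω, c ω * pot Y0 Y1 t ω * G ω ∂P)) := by
      intro c hc hcb
      refine tendsto_integral_of_dominated_convergence _ (fun n => ?_) hbound (fun n => ?_) ?_
      · exact (hc.mul ((SAux.tc_meas n).comp hYtm)).aestronglyMeasurable.mul hGaesm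
      · refine Filter.Eventually.of_forall fun ω => ?_
        rw [Real.norm_eq_abs, abs_mul, abs_mul, abs_mul]
        have h1 : |c ω| * |SAux.tc n (pot Y0 Y1 t ω)| ≤ 1 * |pot Y0 Y1 t ω| :=
          mul_le_mul (hcb ω) (SAux.tc_abs_le n _) (abs_nonneg _) zero_le_one
        calc |c ω| * |SAux.tc n (pot Y0 Y1 t ω)| * |G ω|
            ≤ 1 * |pot Y0 Y1 t ω| * |G ω| := mul_le_mul_of_nonneg_right h1 (abs_nonneg _)
          _ = |pot Y0 Y1 t ω| * |G ω| := by ring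
      · exact Filter.Eventually.of_forall fun ω =>
          ((SAux.tc_tendsto (pot Y0 Y1 t ω)).const_mul (c ω)).mul_const (G ω)
    have lim1 := hdom T hT hTb
    have lim2 := hdom (fun ω => e (X ω)) hEm hEb
    have heq : ∫ ω, T ω * pot Y0 Y1 t ω * G ω ∂P = ∫ ω, e (X ω) * pot Y0 Y1 t ω * G ω ∂P := by
      have hfe : (fun n : ℕ => ∫ ω, T ω * SAux.tc n (pot Y0 Y1 t ω) * G ω ∂P)
          = fun n : ℕ => ∫ ω, e (X ω) * SAux.tc n (pot Y0 Y1 t ω) * G ω ∂P := funext step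
      rw [hfe] at lim1
      exact tendsto_nhds_unique lim1 lim2
    have hYti : Integrable (pot Y0 Y1 t) P := hYtL2.integrable one_le_two
    have hGEL2 : MemLp (fun ω => G ω * e (X ω)) 2 P :=
      (SAux.memℒp_bdd_mul hEm.aestronglyMeasurable
        (Filter.Eventually.of_forall hEb) hGL2).ae_eq
        (Filter.Eventually.of_forall fun ω => by ring)
    have hGEYt : Integrable (fun ω => (G ω * e (X ω)) * pot Y0 Y1 t ω) P :=
      SAux.integrable_mul_L2 hGEL2 hYtL2
    calc ∫ ω, T ω * pot Y0 Y1 t ω * G ω ∂P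
        = ∫ ω, e (X ω) * pot Y0 Y1 t ω * G ω ∂P := heq
      _ = ∫ ω, (G ω * e (X ω)) * pot Y0 Y1 t ω ∂P :=
          integral_congr_ae (Filter.Eventually.of_forall fun ω => by ring)
      _ = ∫ ω, (G ω * e (X ω)) * (P[pot Y0 Y1 t|mX X]) ω ∂P :=
          SAux.integral_mul_condexp hm (hG.mul hEsm) hYti hGEYt
      _ = ∫ ω, (G ω * e (X ω)) * mu t (X ω) ∂P := by
          refine integral_congr_ae ?_
          filter_upwards [hmuSt] with ω h1
          rw [← h1]
      _ = ∫ ω, e (X ω) * mu t (X ω) * G ω ∂P :=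
          integral_congr_ae (Filter.Eventually.of_forall fun ω => by ring)
  -- specializations
  have key1 : ∀ G : Ω → ℝ, StronglyMeasurable[mX X] G → MemLp G 2 P →
      ∫ ω, T ω * Y1 ω * G ω ∂P = ∫ ω, e (X ω) * mu 1 (X ω) * G ω ∂P := by
    intro G hG h2
    have h := key 1 (Or.inr rfl) G hG h2
    rwa [hpot1] at h
  have key0 : ∀ G : Ω → ℝ, StronglyMeasurable[mX X] G → MemLp G 2 P →
      ∫ ω, T ω * Y0 ω * G ω ∂P = ∫ ω, e (X ω) * mu 0 (X ω) * G ω ∂P := by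
    intro G hG h2
    have h := key 0 (Or.inl rfl) G hG h2
    rwa [hpot0] at h
  have keyY : ∀ t : ℝ, t = 0 ∨ t = 1 → ∀ G : Ω → ℝ, StronglyMeasurable[mX X] G →
      MemLp G 2 P →
      ∫ ω, pot Y0 Y1 t ω * G ω ∂P = ∫ ω, mu t (X ω) * G ω ∂P := by
    intro t ht G hG hGL2
    have hYtL2 : MemLp (pot Y0 Y1 t) 2 P := by
      rcases ht with h | h <;> subst h
      · rw [hpot0]; exact hY0L2
      · rw [hpot1]; exact hY1L2
    have hYti : Integrable (pot Y0 Y1 t) P := hYtL2.integrable one_le_two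
    have hGYt : Integrable (fun ω => G ω * pot Y0 Y1 t ω) P :=
      SAux.integrable_mul_L2 hGL2 hYtL2
    calc ∫ ω, pot Y0 Y1 t ω * G ω ∂P
        = ∫ ω, G ω * pot Y0 Y1 t ω ∂P :=
          integral_congr_ae (Filter.Eventually.of_forall fun ω => by ring)
      _ = ∫ ω, G ω * (P[pot Y0 Y1 t|mX X]) ω ∂P :=
          SAux.integral_mul_condexp hm hG hYti hGYt
      _ = ∫ ω, G ω * mu t (X ω) ∂P := by
          refine integral_congr_ae ?_
          filter_upwards [hmuSpec t ht] with ω h1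
          rw [← h1]
      _ = ∫ ω, mu t (X ω) * G ω ∂P :=
          integral_congr_ae (Filter.Eventually.of_forall fun ω => by ring)
  have keyY0 : ∀ G : Ω → ℝ, StronglyMeasurable[mX X] G → MemLp G 2 P →
      ∫ ω, Y0 ω * G ω ∂P = ∫ ω, mu 0 (X ω) * G ω ∂P := by
    intro G hG h2
    have h := keyY 0 (Or.inl rfl) G hG h2
    rwa [hpot0] at h
  have keyT : ∀ G : Ω → ℝ, StronglyMeasurable[mX X] G → Integrable G P →
      ∫ ω, T ω * G ω ∂P = ∫ ω, e (X ω) * G ω ∂P := by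
    intro G hG hGi
    have hGT : Integrable (fun ω => G ω * T ω) P :=
      (SAux.integrable_bdd_mul hT.aestronglyMeasurable
        (Filter.Eventually.of_forall hTb) hGi).congr
        (Filter.Eventually.of_forall fun ω => by ring)
    calc ∫ ω, T ω * G ω ∂P
        = ∫ ω, G ω * T ω ∂P := integral_congr_ae (Filter.Eventually.of_forall fun ω => by ring)
      _ = ∫ ω, G ω * (P[T|mX X]) ω ∂P := SAux.integral_mul_condexp hm hG hTint hGT
      _ = ∫ ω, G ω * e (X ω) ∂P := by
          refine integral_congr_ae ?_
          filter_upwards [heSpec] with ω h1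
          rw [← h1]
      _ = ∫ ω, e (X ω) * G ω ∂P :=
          integral_congr_ae (Filter.Eventually.of_forall fun ω => by ring)

  -- ===== assembly =====
  set dlt : ℝ := (∫ ω', Y1 ω' ∂P) - ∫ ω', Y0 ω' ∂P with hdlt
  have hCL2 : MemLp (fun ω => mu 1 (X ω) - mu 0 (X ω) - dlt) 2 P :=
    ((hM1L2.sub hM0L2).sub (memLp_const dlt)).ae_eq (Filter.Eventually.of_forall fun ω => rfl)
  have hDL2 : MemLp (fun ω => mu 1 (X ω) - mu 0 (X ω)) 2 P :=
    (hM1L2.sub hM0L2).ae_eq (Filter.Eventually.of_forall fun ω => rfl)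
  have hEX : Measurable[mX X] fun ω => e (X ω) := he.comp hXm
  have hM1X : Measurable[mX X] fun ω => mu 1 (X ω) := hmu1.comp hXm
  have hM0X : Measurable[mX X] fun ω => mu 0 (X ω) := hmu0.comp hXm
  have intT : ∀ h : Ω → ℝ, Integrable h P → Integrable (fun ω => T ω * h ω) P := fun h hh =>
    SAux.integrable_bdd_mul hT.aestronglyMeasurable (Filter.Eventually.of_forall hTb) hh
  have intT3 : ∀ f g : Ω → ℝ, Integrable (fun ω => f ω * g ω) P →
      Integrable (fun ω => T ω * f ω * g ω) P := fun f g hfg =>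
    (intT _ hfg).congr (Filter.Eventually.of_forall fun ω => by ring)
  have intE2 : ∀ h : Ω → ℝ, Integrable h P → Integrable (fun ω => e (X ω) * h ω) P := fun h hh =>
    SAux.integrable_bdd_mul hEm.aestronglyMeasurable (Filter.Eventually.of_forall hEb) hh
  have intE3 : ∀ f g : Ω → ℝ, Integrable (fun ω => f ω * g ω) P →
      Integrable (fun ω => e (X ω) * f ω * g ω) P := fun f g hfg =>
    (intE2 _ hfg).congr (Filter.Eventually.of_forall fun ω => by ring)
  -- the multiplier functions
  set GA : Ω → ℝ := fun ω => 1 / e (X ω) ^ 2 * mu 1 (X ω) with hGA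
  set GB : Ω → ℝ := fun ω => 1 / e (X ω) * (mu 1 (X ω) - mu 0 (X ω) - dlt) with hGB
  set GC : Ω → ℝ := fun ω => 1 / e (X ω) ^ 2 * (mu 1 (X ω) * mu 1 (X ω)) with hGC
  set GD : Ω → ℝ := fun ω => 1 / e (X ω) * (mu 1 (X ω) * (mu 1 (X ω) - mu 0 (X ω) - dlt)) with hGD
  set GP : Ω → ℝ := fun ω => 1 / (1 - e (X ω)) ^ 2 * mu 0 (X ω) with hGP
  set GQ : Ω → ℝ := fun ω => 1 / (1 - e (X ω)) * (mu 1 (X ω) - mu 0 (X ω) - dlt) with hGQ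
  set GR : Ω → ℝ := fun ω => 1 / (1 - e (X ω)) ^ 2 * (mu 0 (X ω) * mu 0 (X ω)) with hGR
  set GS : Ω → ℝ := fun ω => 1 / (1 - e (X ω)) * (mu 0 (X ω) * (mu 1 (X ω) - mu 0 (X ω) - dlt))
    with hGS
  set GI : Ω → ℝ := fun ω => 1 / e (X ω) with hGI
  set GJ : Ω → ℝ := fun ω => 1 / (1 - e (X ω)) with hGJ
  have hCX : Measurable[mX X] fun ω => mu 1 (X ω) - mu 0 (X ω) - dlt :=
    (hM1X.sub hM0X).sub measurable_const
  have hGAsm : StronglyMeasurable[mX X] GA :=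
    ((measurable_const.div (hEX.pow_const 2)).mul hM1X).stronglyMeasurable
  have hGBsm : StronglyMeasurable[mX X] GB :=
    ((measurable_const.div hEX).mul hCX).stronglyMeasurable
  have hGCsm : StronglyMeasurable[mX X] GC :=
    ((measurable_const.div (hEX.pow_const 2)).mul (hM1X.mul hM1X)).stronglyMeasurable
  have hGDsm : StronglyMeasurable[mX X] GD :=
    ((measurable_const.div hEX).mul (hM1X.mul hCX)).stronglyMeasurable
  have hGPsm : StronglyMeasurable[mX X] GP :=
    ((measurable_const.div ((measurable_const.sub hEX).pow_const 2)).mul hM0X).stronglyMeasurable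
  have hGQsm : StronglyMeasurable[mX X] GQ :=
    ((measurable_const.div (measurable_const.sub hEX)).mul hCX).stronglyMeasurable
  have hGRsm : StronglyMeasurable[mX X] GR :=
    ((measurable_const.div ((measurable_const.sub hEX).pow_const 2)).mul
      (hM0X.mul hM0X)).stronglyMeasurable
  have hGSsm : StronglyMeasurable[mX X] GS :=
    ((measurable_const.div (measurable_const.sub hEX)).mul (hM0X.mul hCX)).stronglyMeasurable
  have hGIsm : StronglyMeasurable[mX X] GI := (measurable_const.div hEX).stronglyMeasurable
  have hGJsm : StronglyMeasurable[mX X] GJ :=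
    (measurable_const.div (measurable_const.sub hEX)).stronglyMeasurable
  have hGA2 : MemLp GA 2 P :=
    SAux.memℒp_bdd_mul (measurable_const.div (hEm.pow_const 2)).aestronglyMeasurable hbE2 hM1L2
  have hGB2 : MemLp GB 2 P :=
    SAux.memℒp_bdd_mul (measurable_const.div hEm).aestronglyMeasurable hbE1 hCL2
  have hGP2 : MemLp GP 2 P :=
    SAux.memℒp_bdd_mul
      (measurable_const.div ((measurable_const.sub hEm).pow_const 2)).aestronglyMeasurable
      hbF2 hM0L2
  have hGQ2 : MemLp GQ 2 P :=
    SAux.memℒp_bdd_mul (measurable_const.div (measurable_const.sub hEm)).aestronglyMeasurable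
      hbF1 hCL2
  have hGI2 : MemLp GI 2 P :=
    SAux.memℒp_of_bdd (measurable_const.div hEm).aestronglyMeasurable hbE1
  have hGJ2 : MemLp GJ 2 P :=
    SAux.memℒp_of_bdd (measurable_const.div (measurable_const.sub hEm)).aestronglyMeasurable hbF1
  have hGCi : Integrable GC P :=
    SAux.integrable_bdd_mul (measurable_const.div (hEm.pow_const 2)).aestronglyMeasurable hbE2
      (SAux.integrable_mul_L2 hM1L2 hM1L2)
  have hGDi : Integrable GD P :=
    SAux.integrable_bdd_mul (measurable_const.div hEm).aestronglyMeasurable hbE1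
      (SAux.integrable_mul_L2 hM1L2 hCL2)
  have hGRi : Integrable GR P :=
    SAux.integrable_bdd_mul
      (measurable_const.div ((measurable_const.sub hEm).pow_const 2)).aestronglyMeasurable hbF2
      (SAux.integrable_mul_L2 hM0L2 hM0L2)
  have hGSi : Integrable GS P :=
    SAux.integrable_bdd_mul (measurable_const.div (measurable_const.sub hEm)).aestronglyMeasurable
      hbF1 (SAux.integrable_mul_L2 hM0L2 hCL2)
  clear_value GA GB GC GD GP GQ GR GS GI GJ
  -- named integral values
  set Q1 : ℝ := ∫ ω, T ω / e (X ω) ^ 2 * (Y1 ω * Y1 ω) ∂P with hQQ1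
  set Q0 : ℝ := ∫ ω, (1 - T ω) / (1 - e (X ω)) ^ 2 * (Y0 ω * Y0 ω) ∂P with hQQ0
  set R1 : ℝ := ∫ ω, mu 1 (X ω) * mu 1 (X ω) / e (X ω) ∂P with hRR1
  set R0 : ℝ := ∫ ω, mu 0 (X ω) * mu 0 (X ω) / (1 - e (X ω)) ∂P with hRR0
  set K : ℝ := ∫ ω, (mu 1 (X ω) - mu 0 (X ω)) * (mu 1 (X ω) - mu 0 (X ω)) ∂P with hKK
  set m1v : ℝ := ∫ ω, mu 1 (X ω) ∂P with hm1v
  set m0v : ℝ := ∫ ω, mu 0 (X ω) ∂P with hm0v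
  clear_value Q1 Q0 R1 R0 K m1v m0v
  have hm1 : m1v = ∫ ω, Y1 ω ∂P := by
    rw [hm1v]
    calc ∫ ω, mu 1 (X ω) ∂P = ∫ ω, (P[Y1|mX X]) ω ∂P := integral_congr_ae hmuS1
      _ = ∫ ω, Y1 ω ∂P := integral_condExp hm
  have hm0 : m0v = ∫ ω, Y0 ω ∂P := by
    rw [hm0v]
    calc ∫ ω, mu 0 (X ω) ∂P = ∫ ω, (P[Y0|mX X]) ω ∂P := integral_congr_ae hmuS0
      _ = ∫ ω, Y0 ω ∂P := integral_condExp hm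
  have hd : dlt = m1v - m0v := by rw [hm1, hm0]
  -- evaluated integrals
  have evTY1GA : ∫ ω, T ω * Y1 ω * GA ω ∂P = R1 := by
    rw [key1 GA hGAsm hGA2, hRR1]
    refine integral_congr_ae ?_
    filter_upwards [hEne] with ω h
    simp only [hGA]; field_simp [h.1, h.2]
  have evTGC : ∫ ω, T ω * GC ω ∂P = R1 := by
    rw [keyT GC hGCsm hGCi, hRR1]
    refine integral_congr_ae ?_
    filter_upwards [hEne] with ω h
    simp only [hGC]; field_simp [h.1, h.2]
  have hg1 : ∫ ω, T ω / e (X ω) ^ 2 * ((Y1 ω - mu 1 (X ω)) * (Y1 ω - mu 1 (X ω))) ∂P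
      = Q1 - 2 * R1 + R1 := by
    have ia : Integrable (fun ω => T ω / e (X ω) ^ 2 * (Y1 ω * Y1 ω)) P :=
      SAux.integrable_bdd_mul (hT.div (hEm.pow_const 2)).aestronglyMeasurable hbT2
        (SAux.integrable_mul_L2 hY1L2 hY1L2)
    have ib : Integrable (fun ω => T ω * Y1 ω * GA ω) P :=
      intT3 _ _ (SAux.integrable_mul_L2 hY1L2 hGA2)
    have ic : Integrable (fun ω => T ω * GC ω) P := intT _ hGCi
    have hfe : (fun ω => T ω / e (X ω) ^ 2 * ((Y1 ω - mu 1 (X ω)) * (Y1 ω - mu 1 (X ω))))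
        = fun ω => (T ω / e (X ω) ^ 2 * (Y1 ω * Y1 ω) - 2 * (T ω * Y1 ω * GA ω)) + T ω * GC ω :=
      funext fun ω => by simp only [hGA, hGC]; ring
    have ib2 : Integrable (fun ω => 2 * (T ω * Y1 ω * GA ω)) P := ib.const_mul 2
    have iab : Integrable
        (fun ω => T ω / e (X ω) ^ 2 * (Y1 ω * Y1 ω) - 2 * (T ω * Y1 ω * GA ω)) P := ia.sub ib2
    rw [hfe, integral_add iab ic, integral_sub ia ib2, integral_const_mul, evTY1GA, evTGC, hQQ1]
  have hg3 : ∫ ω, T ω / e (X ω) * ((Y1 ω - mu 1 (X ω)) * (mu 1 (X ω) - mu 0 (X ω) - dlt)) ∂P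
      = 0 := by
    have ib : Integrable (fun ω => T ω * Y1 ω * GB ω) P :=
      intT3 _ _ (SAux.integrable_mul_L2 hY1L2 hGB2)
    have ic : Integrable (fun ω => T ω * GD ω) P := intT _ hGDi
    have hfe : (fun ω => T ω / e (X ω) * ((Y1 ω - mu 1 (X ω)) * (mu 1 (X ω) - mu 0 (X ω) - dlt)))
        = fun ω => T ω * Y1 ω * GB ω - T ω * GD ω :=
      funext fun ω => by simp only [hGB, hGD]; ring
    rw [hfe, integral_sub ib ic, key1 GB hGBsm hGB2, keyT GD hGDsm hGDi,
      ← integral_sub (intE3 _ _ (SAux.integrable_mul_L2 hM1L2 hGB2)) (intE2 _ hGDi)]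
    refine integral_eq_zero_of_ae (Filter.Eventually.of_forall fun ω => ?_)
    simp only [Pi.zero_apply, hGB, hGD]; ring
  have evab : (∫ ω, Y0 ω * GP ω ∂P) - ∫ ω, T ω * Y0 ω * GP ω ∂P = R0 := by
    rw [keyY0 GP hGPsm hGP2, key0 GP hGPsm hGP2,
      ← integral_sub (SAux.integrable_mul_L2 hM0L2 hGP2)
        (intE3 _ _ (SAux.integrable_mul_L2 hM0L2 hGP2)), hRR0]
    refine integral_congr_ae ?_
    filter_upwards [hEne] with ω h
    simp only [hGP]; field_simp [h.1, h.2]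
  have evcd : (∫ ω, GR ω ∂P) - ∫ ω, T ω * GR ω ∂P = R0 := by
    rw [keyT GR hGRsm hGRi, ← integral_sub hGRi (intE2 _ hGRi), hRR0]
    refine integral_congr_ae ?_
    filter_upwards [hEne] with ω h
    simp only [hGR]; field_simp [h.1, h.2]
  have hg2 : ∫ ω, (1 - T ω) / (1 - e (X ω)) ^ 2 * ((Y0 ω - mu 0 (X ω)) * (Y0 ω - mu 0 (X ω))) ∂P
      = Q0 - 2 * R0 + R0 := by
    have iq0 : Integrable (fun ω => (1 - T ω) / (1 - e (X ω)) ^ 2 * (Y0 ω * Y0 ω)) P :=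
      SAux.integrable_bdd_mul
        ((measurable_const.sub hT).div ((measurable_const.sub hEm).pow_const 2)).aestronglyMeasurable
        hbU2 (SAux.integrable_mul_L2 hY0L2 hY0L2)
    have ia : Integrable (fun ω => Y0 ω * GP ω) P := SAux.integrable_mul_L2 hY0L2 hGP2
    have ib : Integrable (fun ω => T ω * Y0 ω * GP ω) P := intT3 _ _ ia
    have ic : Integrable GR P := hGRi
    have id' : Integrable (fun ω => T ω * GR ω) P := intT _ hGRi
    have hfe : (fun ω => (1 - T ω) / (1 - e (X ω)) ^ 2 *
          ((Y0 ω - mu 0 (X ω)) * (Y0 ω - mu 0 (X ω))))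
        = fun ω => ((1 - T ω) / (1 - e (X ω)) ^ 2 * (Y0 ω * Y0 ω)
            - 2 * (Y0 ω * GP ω - T ω * Y0 ω * GP ω)) + (GR ω - T ω * GR ω) :=
      funext fun ω => by simp only [hGP, hGR]; ring
    have iab : Integrable (fun ω => Y0 ω * GP ω - T ω * Y0 ω * GP ω) P := ia.sub ib
    have iab2 : Integrable (fun ω => 2 * (Y0 ω * GP ω - T ω * Y0 ω * GP ω)) P := iab.const_mul 2
    have ileft : Integrable (fun ω => (1 - T ω) / (1 - e (X ω)) ^ 2 * (Y0 ω * Y0 ω)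
        - 2 * (Y0 ω * GP ω - T ω * Y0 ω * GP ω)) P := iq0.sub iab2
    have icd : Integrable (fun ω => GR ω - T ω * GR ω) P := ic.sub id'
    rw [hfe, integral_add ileft icd, integral_sub iq0 iab2, integral_const_mul,
      integral_sub ia ib, integral_sub ic id', evab, evcd, hQQ0]
  have hg4 : ∫ ω, (1 - T ω) / (1 - e (X ω)) *
      ((Y0 ω - mu 0 (X ω)) * (mu 1 (X ω) - mu 0 (X ω) - dlt)) ∂P = 0 := by
    have ia : Integrable (fun ω => Y0 ω * GQ ω) P := SAux.integrable_mul_L2 hY0L2 hGQ2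
    have ib : Integrable (fun ω => T ω * Y0 ω * GQ ω) P := intT3 _ _ ia
    have ic : Integrable GS P := hGSi
    have id' : Integrable (fun ω => T ω * GS ω) P := intT _ hGSi
    have hfe : (fun ω => (1 - T ω) / (1 - e (X ω)) *
          ((Y0 ω - mu 0 (X ω)) * (mu 1 (X ω) - mu 0 (X ω) - dlt)))
        = fun ω => (Y0 ω * GQ ω - T ω * Y0 ω * GQ ω) - (GS ω - T ω * GS ω) :=
      funext fun ω => by simp only [hGQ, hGS]; ring
    have e1 := keyY0 GQ hGQsm hGQ2
    have e2 := key0 GQ hGQsm hGQ2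
    have e3 := keyT GS hGSsm hGSi
    have e4 : ∫ ω, mu 0 (X ω) * GQ ω ∂P = ∫ ω, GS ω ∂P :=
      integral_congr_ae (Filter.Eventually.of_forall fun ω => by simp only [hGQ, hGS]; ring)
    have e5 : ∫ ω, e (X ω) * mu 0 (X ω) * GQ ω ∂P = ∫ ω, e (X ω) * GS ω ∂P :=
      integral_congr_ae (Filter.Eventually.of_forall fun ω => by simp only [hGQ, hGS]; ring)
    have iab : Integrable (fun ω => Y0 ω * GQ ω - T ω * Y0 ω * GQ ω) P := ia.sub ib
    have icd : Integrable (fun ω => GS ω - T ω * GS ω) P := ic.sub id'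
    rw [hfe, integral_sub iab icd, integral_sub ia ib, integral_sub ic id',
      e1, e2, e3, e4, e5]
    ring
  have hg0 : ∫ ω, (mu 1 (X ω) - mu 0 (X ω) - dlt) * (mu 1 (X ω) - mu 0 (X ω) - dlt) ∂P
      = K - 2 * dlt * (m1v - m0v) + dlt ^ 2 := by
    have hintD : Integrable (fun ω => (mu 1 (X ω) - mu 0 (X ω)) * (mu 1 (X ω) - mu 0 (X ω))) P :=
      SAux.integrable_mul_L2 hDL2 hDL2
    have hD1 : Integrable (fun ω => mu 1 (X ω) - mu 0 (X ω)) P := hDL2.integrable one_le_two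
    have hM1i : Integrable (fun ω => mu 1 (X ω)) P := hM1L2.integrable one_le_two
    have hM0i : Integrable (fun ω => mu 0 (X ω)) P := hM0L2.integrable one_le_two
    have hfe : (fun ω => (mu 1 (X ω) - mu 0 (X ω) - dlt) * (mu 1 (X ω) - mu 0 (X ω) - dlt))
        = fun ω => ((mu 1 (X ω) - mu 0 (X ω)) * (mu 1 (X ω) - mu 0 (X ω))
            - 2 * dlt * (mu 1 (X ω) - mu 0 (X ω))) + dlt ^ 2 :=
      funext fun ω => by ring
    have hD2 : Integrable (fun ω => 2 * dlt * (mu 1 (X ω) - mu 0 (X ω))) P :=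
      hD1.const_mul (2 * dlt)
    have hDD : Integrable (fun ω => (mu 1 (X ω) - mu 0 (X ω)) * (mu 1 (X ω) - mu 0 (X ω))
        - 2 * dlt * (mu 1 (X ω) - mu 0 (X ω))) P := hintD.sub hD2
    rw [hfe, integral_add hDD (integrable_const _), integral_sub hintD hD2,
      integral_const_mul, integral_const, integral_sub hM1i hM0i, hKK, ← hm1v, ← hm0v]
    simp [measure_univ]
  -- left-hand side expansion
  have hLHS : ∫ ω, psiIV X T (obs T Y0 Y1) e mu dlt ω ^ 2 ∂P
      = (∫ ω, (mu 1 (X ω) - mu 0 (X ω) - dlt) * (mu 1 (X ω) - mu 0 (X ω) - dlt) ∂P)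
        + (∫ ω, T ω / e (X ω) ^ 2 * ((Y1 ω - mu 1 (X ω)) * (Y1 ω - mu 1 (X ω))) ∂P)
        + (∫ ω, (1 - T ω) / (1 - e (X ω)) ^ 2 *
            ((Y0 ω - mu 0 (X ω)) * (Y0 ω - mu 0 (X ω))) ∂P)
        + 2 * (∫ ω, T ω / e (X ω) *
            ((Y1 ω - mu 1 (X ω)) * (mu 1 (X ω) - mu 0 (X ω) - dlt)) ∂P)
        - 2 * (∫ ω, (1 - T ω) / (1 - e (X ω)) *
            ((Y0 ω - mu 0 (X ω)) * (mu 1 (X ω) - mu 0 (X ω) - dlt)) ∂P) := by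
    have ig0 : Integrable (fun ω =>
        (mu 1 (X ω) - mu 0 (X ω) - dlt) * (mu 1 (X ω) - mu 0 (X ω) - dlt)) P :=
      SAux.integrable_mul_L2 hCL2 hCL2
    have ig1 : Integrable (fun ω =>
        T ω / e (X ω) ^ 2 * ((Y1 ω - mu 1 (X ω)) * (Y1 ω - mu 1 (X ω)))) P :=
      SAux.integrable_bdd_mul (hT.div (hEm.pow_const 2)).aestronglyMeasurable hbT2
        (SAux.integrable_mul_L2 (hY1L2.sub hM1L2) (hY1L2.sub hM1L2))
    have ig2 : Integrable (fun ω => (1 - T ω) / (1 - e (X ω)) ^ 2 *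
        ((Y0 ω - mu 0 (X ω)) * (Y0 ω - mu 0 (X ω)))) P :=
      SAux.integrable_bdd_mul
        ((measurable_const.sub hT).div ((measurable_const.sub hEm).pow_const 2)).aestronglyMeasurable
        hbU2 (SAux.integrable_mul_L2 (hY0L2.sub hM0L2) (hY0L2.sub hM0L2))
    have ig3 : Integrable (fun ω =>
        T ω / e (X ω) * ((Y1 ω - mu 1 (X ω)) * (mu 1 (X ω) - mu 0 (X ω) - dlt))) P :=
      SAux.integrable_bdd_mul (hT.div hEm).aestronglyMeasurable hbT1
        (SAux.integrable_mul_L2 (hY1L2.sub hM1L2) hCL2)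
    have ig4 : Integrable (fun ω => (1 - T ω) / (1 - e (X ω)) *
        ((Y0 ω - mu 0 (X ω)) * (mu 1 (X ω) - mu 0 (X ω) - dlt))) P :=
      SAux.integrable_bdd_mul
        ((measurable_const.sub hT).div (measurable_const.sub hEm)).aestronglyMeasurable hbU1
        (SAux.integrable_mul_L2 (hY0L2.sub hM0L2) hCL2)
    have hfe : ∫ ω, psiIV X T (obs T Y0 Y1) e mu dlt ω ^ 2 ∂P
        = ∫ ω, ((((mu 1 (X ω) - mu 0 (X ω) - dlt) * (mu 1 (X ω) - mu 0 (X ω) - dlt)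
            + T ω / e (X ω) ^ 2 * ((Y1 ω - mu 1 (X ω)) * (Y1 ω - mu 1 (X ω)))
            + (1 - T ω) / (1 - e (X ω)) ^ 2 * ((Y0 ω - mu 0 (X ω)) * (Y0 ω - mu 0 (X ω)))
            + 2 * (T ω / e (X ω) * ((Y1 ω - mu 1 (X ω)) * (mu 1 (X ω) - mu 0 (X ω) - dlt))))
            - 2 * ((1 - T ω) / (1 - e (X ω)) *
                ((Y0 ω - mu 0 (X ω)) * (mu 1 (X ω) - mu 0 (X ω) - dlt)))) : ℝ) ∂P := by
      refine integral_congr_ae ?_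
      filter_upwards [hEne] with ω hne
      rcases hT01 ω with h | h <;>
        simp only [psiIV, obs, h] <;> norm_num <;> field_simp [hne.1, hne.2] <;> ring
    have ig32 : Integrable (fun ω =>
        2 * (T ω / e (X ω) * ((Y1 ω - mu 1 (X ω)) * (mu 1 (X ω) - mu 0 (X ω) - dlt)))) P :=
      ig3.const_mul 2
    have i01 : Integrable (fun ω =>
        (mu 1 (X ω) - mu 0 (X ω) - dlt) * (mu 1 (X ω) - mu 0 (X ω) - dlt)
        + T ω / e (X ω) ^ 2 * ((Y1 ω - mu 1 (X ω)) * (Y1 ω - mu 1 (X ω)))) P := ig0.add ig1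
    have i012 : Integrable (fun ω =>
        (mu 1 (X ω) - mu 0 (X ω) - dlt) * (mu 1 (X ω) - mu 0 (X ω) - dlt)
        + T ω / e (X ω) ^ 2 * ((Y1 ω - mu 1 (X ω)) * (Y1 ω - mu 1 (X ω)))
        + (1 - T ω) / (1 - e (X ω)) ^ 2 * ((Y0 ω - mu 0 (X ω)) * (Y0 ω - mu 0 (X ω)))) P :=
      i01.add ig2
    have i0123 : Integrable (fun ω =>
        (mu 1 (X ω) - mu 0 (X ω) - dlt) * (mu 1 (X ω) - mu 0 (X ω) - dlt)
        + T ω / e (X ω) ^ 2 * ((Y1 ω - mu 1 (X ω)) * (Y1 ω - mu 1 (X ω)))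
        + (1 - T ω) / (1 - e (X ω)) ^ 2 * ((Y0 ω - mu 0 (X ω)) * (Y0 ω - mu 0 (X ω)))
        + 2 * (T ω / e (X ω) * ((Y1 ω - mu 1 (X ω)) * (mu 1 (X ω) - mu 0 (X ω) - dlt)))) P :=
      i012.add ig32
    rw [hfe, integral_sub i0123 (ig4.const_mul 2),
      integral_add i012 ig32, integral_add i01 ig2,
      integral_add ig0 ig1, integral_const_mul, integral_const_mul]
  -- variance term
  have iq1 : Integrable (fun ω => T ω / e (X ω) ^ 2 * (Y1 ω * Y1 ω)) P :=
    SAux.integrable_bdd_mul (hT.div (hEm.pow_const 2)).aestronglyMeasurable hbT2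
      (SAux.integrable_mul_L2 hY1L2 hY1L2)
  have iq0 : Integrable (fun ω => (1 - T ω) / (1 - e (X ω)) ^ 2 * (Y0 ω * Y0 ω)) P :=
    SAux.integrable_bdd_mul
      ((measurable_const.sub hT).div ((measurable_const.sub hEm).pow_const 2)).aestronglyMeasurable
      hbU2 (SAux.integrable_mul_L2 hY0L2 hY0L2)
  have hW2 : ∫ ω, ((T ω / e (X ω) - (1 - T ω) / (1 - e (X ω))) * obs T Y0 Y1 ω) ^ 2 ∂P
      = Q1 + Q0 := by
    have hfe : ∫ ω, ((T ω / e (X ω) - (1 - T ω) / (1 - e (X ω))) * obs T Y0 Y1 ω) ^ 2 ∂P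
        = ∫ ω, (T ω / e (X ω) ^ 2 * (Y1 ω * Y1 ω)
            + (1 - T ω) / (1 - e (X ω)) ^ 2 * (Y0 ω * Y0 ω)) ∂P := by
      refine integral_congr_ae ?_
      filter_upwards [hEne] with ω hne
      rcases hT01 ω with h | h <;> simp only [obs, h] <;> norm_num <;>
        field_simp [hne.1, hne.2] <;> ring
    rw [hfe, integral_add iq1 iq0, hQQ1, hQQ0]
  have evW1 : ∫ ω, T ω * Y1 ω * GI ω ∂P = m1v := by
    rw [key1 GI hGIsm hGI2, hm1v]
    refine integral_congr_ae ?_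
    filter_upwards [hEne] with ω h
    simp only [hGI]; field_simp [h.1, h.2]
  have evW0 : (∫ ω, Y0 ω * GJ ω ∂P) - ∫ ω, T ω * Y0 ω * GJ ω ∂P = m0v := by
    rw [keyY0 GJ hGJsm hGJ2, key0 GJ hGJsm hGJ2,
      ← integral_sub (SAux.integrable_mul_L2 hM0L2 hGJ2)
        (intE3 _ _ (SAux.integrable_mul_L2 hM0L2 hGJ2)), hm0v]
    refine integral_congr_ae ?_
    filter_upwards [hEne] with ω h
    simp only [hGJ]; field_simp [h.1, h.2]
  have hW1 : ∫ ω, (T ω / e (X ω) - (1 - T ω) / (1 - e (X ω))) * obs T Y0 Y1 ω ∂P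
      = m1v - m0v := by
    have ia : Integrable (fun ω => T ω * Y1 ω * GI ω) P :=
      intT3 _ _ (SAux.integrable_mul_L2 hY1L2 hGI2)
    have ib : Integrable (fun ω => Y0 ω * GJ ω) P := SAux.integrable_mul_L2 hY0L2 hGJ2
    have ic : Integrable (fun ω => T ω * Y0 ω * GJ ω) P := intT3 _ _ ib
    have hfe : (fun ω => (T ω / e (X ω) - (1 - T ω) / (1 - e (X ω))) * obs T Y0 Y1 ω)
        = fun ω => T ω * Y1 ω * GI ω - (Y0 ω * GJ ω - T ω * Y0 ω * GJ ω) := by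
      funext ω
      rcases hT01 ω with h | h <;> simp only [obs, h, hGI, hGJ] <;> norm_num <;> ring
    have ibc : Integrable (fun ω => Y0 ω * GJ ω - T ω * Y0 ω * GJ ω) P := ib.sub ic
    rw [hfe, integral_sub ia ibc, integral_sub ib ic, evW1, evW0]
  have hVar : Var P (fun ω => (T ω / e (X ω) - (1 - T ω) / (1 - e (X ω))) * obs T Y0 Y1 ω)
      = Q1 + Q0 - (m1v - m0v) ^ 2 := by
    simp only [Var]
    rw [hW2, hW1]
  -- the squared-sqrt term
  have hSq : ∫ ω, (Real.sqrt ((1 - e (X ω)) / e (X ω)) * mu 1 (X ω)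
        + Real.sqrt (e (X ω) / (1 - e (X ω))) * mu 0 (X ω)) ^ 2 ∂P
      = R1 + R0 - K := by
    have ir1 : Integrable (fun ω => mu 1 (X ω) * mu 1 (X ω) / e (X ω)) P :=
      (SAux.integrable_bdd_mul (measurable_const.div hEm).aestronglyMeasurable hbE1
        (SAux.integrable_mul_L2 hM1L2 hM1L2)).congr
        (Filter.Eventually.of_forall fun ω => by simp only [Pi.div_apply, Pi.sub_apply]; ring)
    have ir0 : Integrable (fun ω => mu 0 (X ω) * mu 0 (X ω) / (1 - e (X ω))) P :=
      (SAux.integrable_bdd_mul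
        (measurable_const.div (measurable_const.sub hEm)).aestronglyMeasurable hbF1
        (SAux.integrable_mul_L2 hM0L2 hM0L2)).congr
        (Filter.Eventually.of_forall fun ω => by simp only [Pi.div_apply, Pi.sub_apply]; ring)
    have hintD : Integrable (fun ω => (mu 1 (X ω) - mu 0 (X ω)) * (mu 1 (X ω) - mu 0 (X ω))) P :=
      SAux.integrable_mul_L2 hDL2 hDL2
    have hcong : ∫ ω, (Real.sqrt ((1 - e (X ω)) / e (X ω)) * mu 1 (X ω)
          + Real.sqrt (e (X ω) / (1 - e (X ω))) * mu 0 (X ω)) ^ 2 ∂P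
        = ∫ ω, (mu 1 (X ω) * mu 1 (X ω) / e (X ω)
            + mu 0 (X ω) * mu 0 (X ω) / (1 - e (X ω))
            - (mu 1 (X ω) - mu 0 (X ω)) * (mu 1 (X ω) - mu 0 (X ω))) ∂P := by
      refine integral_congr_ae ?_
      filter_upwards [h2e'] with ω h
      have hE0 : 0 < e (X ω) := lt_of_lt_of_le hε0 h.1
      have hE1 : 0 < 1 - e (X ω) := lt_of_lt_of_le hε0 h.2
      have ha : (0:ℝ) ≤ (1 - e (X ω)) / e (X ω) := by positivity
      have hb : (0:ℝ) ≤ e (X ω) / (1 - e (X ω)) := by positivity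
      have h1 : Real.sqrt ((1 - e (X ω)) / e (X ω)) * Real.sqrt (e (X ω) / (1 - e (X ω))) = 1 := by
        rw [← Real.sqrt_mul ha]
        rw [show (1 - e (X ω)) / e (X ω) * (e (X ω) / (1 - e (X ω))) = 1 by
          field_simp]
        exact Real.sqrt_one
      have h2 : Real.sqrt ((1 - e (X ω)) / e (X ω)) ^ 2 = (1 - e (X ω)) / e (X ω) :=
        Real.sq_sqrt ha
      have h3 : Real.sqrt (e (X ω) / (1 - e (X ω))) ^ 2 = e (X ω) / (1 - e (X ω)) :=
        Real.sq_sqrt hb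
      have hexp : (Real.sqrt ((1 - e (X ω)) / e (X ω)) * mu 1 (X ω)
            + Real.sqrt (e (X ω) / (1 - e (X ω))) * mu 0 (X ω)) ^ 2
          = Real.sqrt ((1 - e (X ω)) / e (X ω)) ^ 2 * (mu 1 (X ω) * mu 1 (X ω))
            + 2 * (Real.sqrt ((1 - e (X ω)) / e (X ω))
                * Real.sqrt (e (X ω) / (1 - e (X ω)))) * (mu 1 (X ω) * mu 0 (X ω))
            + Real.sqrt (e (X ω) / (1 - e (X ω))) ^ 2 * (mu 0 (X ω) * mu 0 (X ω)) := by ring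
      rw [hexp, h1, h2, h3]
      field_simp
      ring
    have irr : Integrable (fun ω => mu 1 (X ω) * mu 1 (X ω) / e (X ω)
        + mu 0 (X ω) * mu 0 (X ω) / (1 - e (X ω))) P := ir1.add ir0
    rw [hcong, integral_sub irr hintD, integral_add ir1 ir0, hRR1, hRR0, hKK]
  -- finish
  rw [hLHS, hg0, hg1, hg2, hg3, hg4, hVar, hSq, hd]
  ring
end
end
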